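/- arXiv:1407.8438 — 7 statements merged into one kernel-verified Lean document; each statement's English description precedes it below -/
import Mathlib

section
/- Fix α₀ ∈ (0, π) and d > 0. Consider a Euclidean triangle with vertices x̄, ȳ, z̄, sides d(x̄,ȳ) = a + d and d(x̄,z̄) = b + d, and angle α at x̄ with α₀ ≤ α < π. Let ū ∈ [x̄,ȳ] with d(ū,ȳ) = a and v̄ ∈ [x̄,z̄] with d(v̄,z̄) = b. Then for all a, b sufficiently large, d(ū,v̄) < d(ȳ,z̄) - d·sin²(α₀/2). -/
/-- Quantitative gap estimate: in a Euclidean triangle with `d(x,y) = a + d`,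
`d(x,z) = b + d` and angle at `x` in `[α₀, π)`, if `u ∈ [x,y]` with `d(u,y) = a`
and `v ∈ [x,z]` with `d(v,z) = b`, then for all `a, b` large enough
`d(u,v) < d(y,z) - d·sin²(α₀/2)`. -/
theorem euclidean_gap_estimate
    (α₀ d : ℝ) (hα₀ : α₀ ∈ Set.Ioo 0 Real.pi) (hd : 0 < d) :
    ∃ N : ℝ, ∀ (x y z u v : EuclideanSpace ℝ (Fin 2)) (a b : ℝ),
      N ≤ a → N ≤ b →
      dist x y = a + d → dist x z = b + d →
      α₀ ≤ EuclideanGeometry.angle y x z → EuclideanGeometry.angle y x z < Real.pi →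
      dist x u + dist u y = dist x y → dist u y = a →
      dist x v + dist v z = dist x z → dist v z = b →
      dist u v < dist y z - d * Real.sin (α₀ / 2) ^ 2 := by
  obtain ⟨hα₀0, hα₀π⟩ := hα₀
  have hcos1 : Real.cos α₀ < 1 := by
    have := Real.strictAntiOn_cos (a := 0) (b := α₀)
      ⟨le_rfl, Real.pi_pos.le⟩ ⟨hα₀0.le, hα₀π.le⟩ hα₀0
    simpa using this
  have hcosm1 : -1 < Real.cos α₀ := by
    have := Real.strictAntiOn_cos (a := α₀) (b := Real.pi)
      ⟨hα₀0.le, hα₀π.le⟩ ⟨Real.pi_pos.le, le_rfl⟩ hα₀π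
    simpa using this
  set ε : ℝ := 1 - Real.cos α₀ with hε
  have hε0 : 0 < ε := by linarith
  have hε2 : ε < 2 := by linarith
  refine ⟨3 * d / ε, ?_⟩
  intro x y z u v a b ha hb hxy hxz hαlo hαhi hu huy hv hvz
  have hN0 : 0 < 3 * d / ε := by positivity
  have ha0 : 0 < a := lt_of_lt_of_le hN0 ha
  have hb0 : 0 < b := lt_of_lt_of_le hN0 hb
  -- dist x u = d, dist x v = d
  have hxu : dist x u = d := by rw [hxy] at hu; linarith
  have hxv : dist x v = d := by rw [hxz] at hv; linarith
  -- dist u v ≤ 2d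
  have huv : dist u v ≤ 2 * d := by
    have := dist_triangle u x v
    rw [dist_comm u x, hxu, hxv] at this
    linarith
  -- sin²(α₀/2) = (1 - cos α₀)/2 < 1
  have hsin : Real.sin (α₀ / 2) ^ 2 = ε / 2 := by
    have h2 : Real.cos (α₀ / 2) ^ 2 = 1 / 2 + Real.cos α₀ / 2 := by
      rw [Real.cos_sq, show 2 * (α₀ / 2) = α₀ by ring]
    have h1 : Real.sin (α₀ / 2) ^ 2 = 1 - Real.cos (α₀ / 2) ^ 2 := by
      nlinarith [Real.sin_sq_add_cos_sq (α₀ / 2)]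
    rw [h1, h2, hε]; ring
  -- law of cosines lower bound
  have hlc := EuclideanGeometry.law_cos y x z
  rw [dist_comm y x, dist_comm z x, hxy, hxz] at hlc
  have hcosα : Real.cos (EuclideanGeometry.angle y x z) ≤ Real.cos α₀ :=
    Real.cos_le_cos_of_nonneg_of_le_pi hα₀0.le hαhi.le hαlo
  -- generalize geometric quantities to opaque reals
  have hRnn : 0 ≤ dist y z := dist_nonneg
  obtain ⟨R, hR⟩ : ∃ R : ℝ, dist y z = R := ⟨_, rfl⟩
  rw [hR] at hlc hRnn ⊢
  obtain ⟨c, hc⟩ : ∃ c : ℝ, Real.cos (EuclideanGeometry.angle y x z) = c := ⟨_, rfl⟩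
  rw [hc] at hlc hcosα
  clear_value ε
  set N : ℝ := 3 * d / ε with hN
  have hNε : N * ε = 3 * d := by rw [hN]; field_simp
  clear_value N
  have hNpos : 0 < N := hN0
  have hprod : N * N ≤ (a + d) * (b + d) :=
    mul_le_mul (by linarith) (by linarith) hNpos.le (by linarith)
  have hN2 : 9 * d ^ 2 ≤ 2 * (N * N) * ε := by
    have e1 : N * N * ε * ε = 9 * d ^ 2 := by linear_combination (N * ε + 3 * d) * hNε
    have e2 : 0 ≤ N * N * ε * (2 - ε) :=
      mul_nonneg (mul_nonneg (mul_nonneg hNpos.le hNpos.le) hε0.le) (by linarith)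
    linarith [e1, e2]
  have hmul : 2 * (a + d) * (b + d) * c ≤ 2 * (a + d) * (b + d) * Real.cos α₀ :=
    mul_le_mul_of_nonneg_left hcosα (by positivity)
  have s1 : (a + d) * (a + d) + (b + d) * (b + d)
      - 2 * (a + d) * (b + d) * Real.cos α₀ ≤ R * R := by linarith
  have s2 : 2 * (a + d) * (b + d) * ε
      ≤ (a + d) * (a + d) + (b + d) * (b + d)
        - 2 * (a + d) * (b + d) * Real.cos α₀ := by
    have e : (a + d) * (a + d) + (b + d) * (b + d)
        - 2 * (a + d) * (b + d) * Real.cos α₀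
        - 2 * (a + d) * (b + d) * (1 - Real.cos α₀) = (a - b) ^ 2 := by ring
    rw [hε]; linarith [sq_nonneg (a - b), e]
  have s3 : 2 * (N * N) * ε ≤ 2 * (a + d) * (b + d) * ε := by
    linarith [mul_le_mul_of_nonneg_right hprod hε0.le]
  have hyz2 : 9 * d ^ 2 ≤ R * R := by linarith
  have hyz : 3 * d ≤ R := by
    by_contra h
    push_neg at h
    have : R * R < (3 * d) * (3 * d) :=
      mul_lt_mul' h.le h hRnn (by positivity)
    linarith [this]
  have hde : d * ε < d * 2 := mul_lt_mul_of_pos_left hε2 hd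
  rw [hsin]
  linarith
end

section
/- For h, ε > 0, in a hyperbolic triangle in H² with d(x̄,ȳ) = h, d(x̄,z̄) = h + ε, and angle at ȳ at least π/2, one has d(ȳ,z̄) ≤ arccosh(e^ε + e^{-ε-2h}). -/
/-- The inverse hyperbolic cosine. -/
noncomputable def arcosh (x : ℝ) : ℝ := Real.log (x + Real.sqrt (x ^ 2 - 1))

/-- For a hyperbolic triangle in `ℍ²` with `d(x,y) = h`, `d(x,z) = h + ε`,
`d(y,z) = c` and angle `γ ≥ π/2` at `y` (satisfying the hyperbolic law of
cosines), one has `c ≤ arccosh(e^ε + e^{-ε-2h})`. -/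
theorem hyperbolic_right_angle_arcosh_estimate
    (h ε c γ : ℝ) (hh : 0 < h) (hε : 0 < ε) (hc : 0 ≤ c)
    (hγ₁ : Real.pi / 2 ≤ γ) (hγ₂ : γ ≤ Real.pi)
    (hlaw : Real.cosh (h + ε) =
      Real.cosh h * Real.cosh c - Real.sinh h * Real.sinh c * Real.cos γ) :
    c ≤ arcosh (Real.exp ε + Real.exp (-ε - 2 * h)) := by
  set X : ℝ := Real.exp ε + Real.exp (-ε - 2 * h) with hXdef
  have hcosγ : Real.cos γ ≤ 0 :=
    Real.cos_nonpos_of_pi_div_two_le_of_le hγ₁ (by linarith [Real.pi_pos])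
  have hsh : 0 ≤ Real.sinh h := Real.sinh_nonneg_iff.mpr hh.le
  have hsc : 0 ≤ Real.sinh c := Real.sinh_nonneg_iff.mpr hc
  have h1 : Real.cosh h * Real.cosh c ≤ Real.cosh (h + ε) := by
    nlinarith [mul_nonneg hsh hsc]
  have key : Real.cosh (h + ε) ≤ X * Real.cosh h := by
    rw [hXdef, Real.cosh_eq, Real.cosh_eq]
    have A : Real.exp (h + ε) = Real.exp h * Real.exp ε := Real.exp_add h ε
    have B : Real.exp (-(h + ε)) = Real.exp (-h) * Real.exp (-ε) := by
      rw [← Real.exp_add]; ring_nf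
    have C : Real.exp (-ε - 2 * h)
        = Real.exp (-ε) * (Real.exp (-h) * Real.exp (-h)) := by
      rw [← Real.exp_add, ← Real.exp_add]; ring_nf
    have D : Real.exp h * Real.exp (-h) = 1 := by
      rw [← Real.exp_add]; simp
    nlinarith [Real.exp_pos h, Real.exp_pos (-h), Real.exp_pos ε, Real.exp_pos (-ε),
      mul_pos (Real.exp_pos (-h)) (Real.exp_pos (-ε)),
      mul_pos (Real.exp_pos (-h)) (mul_pos (Real.exp_pos (-h)) (mul_pos (Real.exp_pos (-h)) (Real.exp_pos (-ε))))]
  have hch : 0 < Real.cosh h := Real.cosh_pos h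
  have hcc : Real.cosh c ≤ X :=
    le_of_mul_le_mul_right (by nlinarith) hch
  have hX1 : 1 ≤ X := le_trans (Real.one_le_cosh c) hcc
  have hsqrt : Real.sinh c ≤ Real.sqrt (X ^ 2 - 1) := by
    rw [show Real.sinh c = Real.sqrt (Real.sinh c ^ 2) from
      (Real.sqrt_sq hsc).symm]
    apply Real.sqrt_le_sqrt
    nlinarith [Real.cosh_sq_sub_sinh_sq c, Real.cosh_pos c]
  have hexp : Real.exp c ≤ X + Real.sqrt (X ^ 2 - 1) := by
    have : Real.exp c = Real.cosh c + Real.sinh c := by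
      rw [Real.cosh_eq, Real.sinh_eq]; ring
    linarith
  have hpos : 0 < X + Real.sqrt (X ^ 2 - 1) := by
    have := Real.sqrt_nonneg (X ^ 2 - 1); linarith
  calc c = Real.log (Real.exp c) := (Real.log_exp c).symm
    _ ≤ arcosh X := Real.log_le_log (Real.exp_pos c) hexp
end

section
/- Let X be a CAT(-1) space and (Δ(xₙ,yₙ,zₙ)) a sequence of geodesic triangles in X such that the Alexandrov angle at yₙ between xₙ and zₙ is at least π/2 for all n, d(xₙ,yₙ) → ∞, and d(xₙ,zₙ) - d(xₙ,yₙ) → 0. Then d(yₙ,zₙ) → 0. -/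
set_option maxHeartbeats 2000000


/-- `p` lies on a geodesic segment between `x` and `y`. -/
def MetricBtw {X : Type*} [MetricSpace X] (x p y : X) : Prop :=
  dist x p + dist p y = dist x y

/-- `X` is a geodesic metric space: any two points are joined by a segment,
realized pointwise at every ratio `t ∈ [0,1]`. -/
def IsGeodesicSpace (X : Type*) [MetricSpace X] : Prop :=
  ∀ x y : X, ∀ t : ℝ, t ∈ Set.Icc (0 : ℝ) 1 →
    ∃ p : X, dist x p = t * dist x y ∧ MetricBtw x p y

/-- A subset is (geodesically) convex. -/
def MetricConvex {X : Type*} [MetricSpace X] (K : Set X) : Prop :=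
  ∀ x ∈ K, ∀ y ∈ K, ∀ p : X, MetricBtw x p y → p ∈ K

/-- The CAT(-1) comparison inequality: distances between points on the sides of a
triangle are bounded by the corresponding distances in a comparison triangle in the
hyperbolic plane `ℍ²` (the upper half-plane with its hyperbolic metric). -/
def IsCatMinusOne (X : Type*) [MetricSpace X] : Prop :=
  ∀ x y z p q : X, MetricBtw x p y → MetricBtw x q z →
    ∀ x' y' z' p' q' : UpperHalfPlane,
      dist x' y' = dist x y → dist x' z' = dist x z → dist y' z' = dist y z →
      MetricBtw x' p' y' → dist x' p' = dist x p →
      MetricBtw x' q' z' → dist x' q' = dist x q →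
      dist p q ≤ dist p' q'

/-- The CAT(0) comparison inequality (comparison triangles in the Euclidean plane). -/
def IsCatZero (X : Type*) [MetricSpace X] : Prop :=
  ∀ x y z p q : X, MetricBtw x p y → MetricBtw x q z →
    ∀ x' y' z' p' q' : EuclideanSpace ℝ (Fin 2),
      dist x' y' = dist x y → dist x' z' = dist x z → dist y' z' = dist y z →
      MetricBtw x' p' y' → dist x' p' = dist x p →
      MetricBtw x' q' z' → dist x' q' = dist x q →
      dist p q ≤ dist p' q'

/-- The CAT(κ) comparison inequality for `κ < 0`: the model space `M²_κ` is the
hyperbolic plane with distance multiplied by `1/√(-κ)`, so comparison triangles in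
`ℍ²` have side lengths `√(-κ)` times those in `X`. -/
def IsCatNeg (κ : ℝ) (X : Type*) [MetricSpace X] : Prop :=
  ∀ x y z p q : X, MetricBtw x p y → MetricBtw x q z →
    ∀ x' y' z' p' q' : UpperHalfPlane,
      dist x' y' = Real.sqrt (-κ) * dist x y →
      dist x' z' = Real.sqrt (-κ) * dist x z →
      dist y' z' = Real.sqrt (-κ) * dist y z →
      MetricBtw x' p' y' → dist x' p' = Real.sqrt (-κ) * dist x p →
      MetricBtw x' q' z' → dist x' q' = Real.sqrt (-κ) * dist x q →
      Real.sqrt (-κ) * dist p q ≤ dist p' q'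

/-- The CAT(κ) condition for `κ ≤ 0`. -/
def IsCatK (κ : ℝ) (X : Type*) [MetricSpace X] : Prop :=
  if κ < 0 then IsCatNeg κ X else IsCatZero X

/-- Euclidean comparison angle determined by the three side lengths. -/
noncomputable def compAngle (a b c : ℝ) : ℝ :=
  Real.arccos ((a ^ 2 + b ^ 2 - c ^ 2) / (2 * a * b))

/-- The Alexandrov angle at `x` between `y` and `z`, defined (as is valid in CAT(0)
spaces) as the infimum of Euclidean comparison angles over points on the segments. -/
noncomputable def alexAngle {X : Type*} [MetricSpace X] (x y z : X) : ℝ :=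
  sInf {θ : ℝ | ∃ p q : X, MetricBtw x p y ∧ MetricBtw x q z ∧ p ≠ x ∧ q ≠ x ∧
    θ = compAngle (dist x p) (dist x q) (dist p q)}

/-- `K` is geodesically bounded: it contains no geodesic ray. -/
def GeodesicallyBounded {X : Type*} [MetricSpace X] (K : Set X) : Prop :=
  ¬ ∃ c : ℝ → X, (∀ s t : ℝ, 0 ≤ s → 0 ≤ t → dist (c s) (c t) = |s - t|) ∧
      ∀ t : ℝ, 0 ≤ t → c t ∈ K

section AuxCatMinusOne

lemma pythagoras_of_angle {X : Type*} [MetricSpace X] {x y z p q : X}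
    (hang : Real.pi/2 ≤ alexAngle y x z)
    (hp : MetricBtw y p x) (hq : MetricBtw y q z) (hpy : p ≠ y) (hqy : q ≠ y) :
    dist y p ^ 2 + dist y q ^ 2 ≤ dist p q ^ 2 := by
  have hmem : compAngle (dist y p) (dist y q) (dist p q) ∈
      {θ : ℝ | ∃ p' q' : X, MetricBtw y p' x ∧ MetricBtw y q' z ∧ p' ≠ y ∧ q' ≠ y ∧
        θ = compAngle (dist y p') (dist y q') (dist p' q')} := ⟨p, q, hp, hq, hpy, hqy, rfl⟩
  have hbdd : BddBelow {θ : ℝ | ∃ p' q' : X, MetricBtw y p' x ∧ MetricBtw y q' z ∧ p' ≠ y ∧ q' ≠ y ∧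
      θ = compAngle (dist y p') (dist y q') (dist p' q')} := by
    refine ⟨0, ?_⟩
    rintro θ ⟨p', q', _, _, _, _, rfl⟩
    exact Real.arccos_nonneg _
  have hθ : Real.pi/2 ≤ compAngle (dist y p) (dist y q) (dist p q) := by
    refine le_trans hang ?_
    exact csInf_le hbdd hmem
  by_contra hc
  push_neg at hc
  have hdp : 0 < dist y p := dist_pos.2 (Ne.symm hpy)
  have hdq : 0 < dist y q := dist_pos.2 (Ne.symm hqy)
  have hpos : 0 < (dist y p ^ 2 + dist y q ^ 2 - dist p q ^ 2)/(2 * dist y p * dist y q) :=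
    div_pos (by linarith) (by positivity)
  have h2 := Real.arccos_lt_pi_div_two.2 hpos
  unfold compAngle at hθ
  linarith


open Real

lemma Dg_pos (c s u : ℝ) (h : 0 < c^2 + s^2) : 0 < c^2 + s^2 * Real.exp u ^ 2 := by
  rcases le_or_gt (Real.exp u ^ 2) 1 with h' | h'
  · nlinarith [mul_pos h (pow_pos (Real.exp_pos u) 2), mul_nonneg (sq_nonneg c) (sub_nonneg.2 h')]
  · nlinarith [sq_nonneg c, sq_nonneg s]

noncomputable def ptg (c s u : ℝ) (h : 0 < c^2 + s^2) : UpperHalfPlane :=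
  ⟨⟨s * c * (1 - Real.exp u ^ 2) / (c^2 + s^2 * Real.exp u ^ 2),
    Real.exp u * (c^2 + s^2) / (c^2 + s^2 * Real.exp u ^ 2)⟩,
    div_pos (mul_pos (Real.exp_pos u) h) (Dg_pos c s u h)⟩

lemma ptg_re (c s u : ℝ) (h : 0 < c^2+s^2) : (ptg c s u h : ℂ).re
    = s * c * (1 - Real.exp u ^ 2) / (c^2 + s^2 * Real.exp u ^ 2) := rfl

lemma ptg_im (c s u : ℝ) (h : 0 < c^2+s^2) : (ptg c s u h).im
    = Real.exp u * (c^2 + s^2) / (c^2 + s^2 * Real.exp u ^ 2) := rfl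

lemma ptg_im' (c s u : ℝ) (h : 0 < c^2+s^2) : (ptg c s u h : ℂ).im
    = Real.exp u * (c^2 + s^2) / (c^2 + s^2 * Real.exp u ^ 2) := rfl

lemma dist_sq_complex (z w : ℂ) : dist z w ^ 2 = (z.re - w.re)^2 + (z.im - w.im)^2 := by
  rw [Complex.dist_eq_re_im, Real.sq_sqrt (by positivity)]

lemma cosh_dist_ptg (c1 s1 c2 s2 u v : ℝ) (h1 : 0 < c1^2+s1^2) (h2 : 0 < c2^2+s2^2) :
    Real.cosh (dist (ptg c1 s1 u h1) (ptg c2 s2 v h2))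
      = Real.cosh u * Real.cosh v
        - ((c1*c2+s1*s2)^2 - (s1*c2-c1*s2)^2) / ((c1^2+s1^2)*(c2^2+s2^2))
          * (Real.sinh u * Real.sinh v) := by
  have hD1 := Dg_pos c1 s1 u h1
  have hD2 := Dg_pos c2 s2 v h2
  have ha := Real.exp_pos u
  have hb := Real.exp_pos v
  rw [UpperHalfPlane.cosh_dist, dist_sq_complex, ptg_re, ptg_re, ptg_im, ptg_im,
    ptg_im', ptg_im', Real.cosh_eq, Real.cosh_eq, Real.sinh_eq, Real.sinh_eq,
    Real.exp_neg, Real.exp_neg]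
  field_simp
  ring

lemma dist_ptg_same (c s : ℝ) (h : 0 < c^2+s^2) (u v : ℝ) :
    dist (ptg c s u h) (ptg c s v h) = |u - v| := by
  have h1 := cosh_dist_ptg c s c s u v h h
  have hfac : ((c*c+s*s)^2 - (s*c-c*s)^2) / ((c^2+s^2)*(c^2+s^2)) = 1 := by
    field_simp; ring
  rw [hfac, one_mul, ← Real.cosh_sub] at h1
  have le1 : |dist (ptg c s u h) (ptg c s v h)| ≤ |u - v| := Real.cosh_le_cosh.1 h1.le
  have le2 : |u - v| ≤ |dist (ptg c s u h) (ptg c s v h)| := Real.cosh_le_cosh.1 h1.ge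
  have := le_antisymm le1 le2
  rwa [abs_of_nonneg dist_nonneg] at this

lemma btw_ptg (c s : ℝ) (h : 0 < c^2+s^2) {u v : ℝ} (h0 : 0 ≤ u) (huv : u ≤ v) :
    MetricBtw (ptg c s 0 h) (ptg c s u h) (ptg c s v h) := by
  unfold MetricBtw
  rw [dist_ptg_same, dist_ptg_same, dist_ptg_same,
    abs_of_nonpos (by linarith : (0:ℝ) - u ≤ 0),
    abs_of_nonpos (by linarith : u - v ≤ 0),
    abs_of_nonpos (by linarith : (0:ℝ) - v ≤ 0)]
  ring

lemma ptg_zero (c s : ℝ) (h : 0 < c^2+s^2) (h' : 0 < (1:ℝ)^2 + 0^2) :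
    ptg c s 0 h = ptg 1 0 0 h' := by
  apply UpperHalfPlane.ext
  apply Complex.ext
  · show s * c * (1 - Real.exp 0 ^ 2) / (c^2 + s^2 * Real.exp 0 ^ 2)
      = 0 * 1 * (1 - Real.exp 0 ^ 2) / (1^2 + 0^2 * Real.exp 0 ^ 2)
    simp [Real.exp_zero]
  · show Real.exp 0 * (c^2 + s^2) / (c^2 + s^2 * Real.exp 0 ^ 2)
      = Real.exp 0 * (1^2 + 0^2) / (1^2 + 0^2 * Real.exp 0 ^ 2)
    rw [Real.exp_zero]
    field_simp

lemma cosh_dist_ptg_vert (c s u v : ℝ) (h : 0 < c^2+s^2) (h' : 0 < (1:ℝ)^2 + 0^2)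
    (hsum : c^2 + s^2 = 1) :
    Real.cosh (dist (ptg 1 0 u h') (ptg c s v h))
      = Real.cosh u * Real.cosh v - (c^2 - s^2) * (Real.sinh u * Real.sinh v) := by
  rw [cosh_dist_ptg]
  have : ((1*c+0*s)^2 - (0*c-1*s)^2) / (((1:ℝ)^2+0^2)*(c^2+s^2)) = c^2 - s^2 := by
    rw [hsum]; ring
  rw [this]

lemma cosh_quad_lb {x : ℝ} (hx : 0 ≤ x) : 1 + x^2/2 ≤ Real.cosh x := by
  have h := Real.cosh_two_mul (x/2)
  rw [show 2*(x/2) = x by ring] at h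
  have hs : x/2 ≤ Real.sinh (x/2) := Real.self_le_sinh_iff.2 (by linarith)
  have hc := Real.cosh_sq (x/2)
  nlinarith [hs]

lemma cosh_quad_ub {x : ℝ} (hx : |x| ≤ 1) : Real.cosh x ≤ 1 + x^2/2 + x^4 := by
  have h₁ := Real.exp_bound hx (by norm_num : 0 < 4)
  have hx' : |(-x)| ≤ 1 := by rwa [abs_neg]
  have h₂ := Real.exp_bound hx' (by norm_num : 0 < 4)
  simp only [Finset.sum_range_succ, Finset.sum_range_zero] at h₁ h₂
  norm_num [Nat.factorial] at h₁ h₂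
  have hx4 : |x|^4 = x^4 := by rw [← abs_pow, abs_of_nonneg (by positivity)]
  rw [hx4] at h₁ h₂
  rw [abs_le] at h₁ h₂
  rw [Real.cosh_eq]
  nlinarith [h₁.2, h₂.2, sq_nonneg x, sq_nonneg (x^2)]


open Real

lemma quart_bound {s A C : ℝ} (hs : 0 < s) (hs12 : s ≤ 1/2) (h1 : 1 ≤ A)
    (hA : A ≤ 1 + s^2/2 + s^4) (hC : 1 + s^2 ≤ C) : A * A - C ≤ 3 * s^4 := by
  have hs2 : s^2 ≤ 1/4 := by nlinarith
  have h6 : s^6 ≤ s^4 / 4 := by nlinarith [pow_pos hs 4]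
  have h8 : s^8 ≤ s^4 / 16 := by nlinarith [pow_pos hs 4, sq_nonneg (s^2)]
  nlinarith [mul_le_mul hA hA (by linarith) (by linarith)]

lemma hyp_pyth {X : Type*} [MetricSpace X] (hgeo : IsGeodesicSpace X) (hcat : IsCatMinusOne X)
    (x y z : X) (hang : Real.pi/2 ≤ alexAngle y x z) :
    Real.cosh (dist y x) * Real.cosh (dist y z) ≤ Real.cosh (dist x z) := by
  by_cases hxy : x = y
  · subst hxy
    simp
  by_cases hzy : z = y
  · subst hzy
    simp [dist_comm]
  set a := dist y x with ha_def
  set b := dist y z with hb_def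
  set c := dist x z with hc_def
  have hA : 0 < a := dist_pos.2 (Ne.symm hxy)
  have hB : 0 < b := dist_pos.2 (Ne.symm hzy)
  have hC : 0 ≤ c := dist_nonneg
  have hsa : 0 < Real.sinh a := Real.sinh_pos_iff.2 hA
  have hsb : 0 < Real.sinh b := Real.sinh_pos_iff.2 hB
  -- triangle inequalities
  have htri1 : c ≤ a + b := by
    rw [ha_def, hb_def, hc_def, dist_comm y x]
    exact dist_triangle x y z
  have htri2 : a - b ≤ c := by
    have : a ≤ b + c := by
      rw [ha_def, hb_def, hc_def, dist_comm x z]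
      exact dist_triangle y z x
    linarith
  have htri3 : b - a ≤ c := by
    have : b ≤ a + c := by
      rw [ha_def, hb_def, hc_def]
      exact dist_triangle y x z
    linarith
  set K := (Real.cosh a * Real.cosh b - Real.cosh c) / (Real.sinh a * Real.sinh b) with hK_def
  have hKc : K * (Real.sinh a * Real.sinh b) = Real.cosh a * Real.cosh b - Real.cosh c := by
    rw [hK_def, div_mul_cancel₀ _ (mul_pos hsa hsb).ne']
  have hK1 : K ≤ 1 := by
    have h1 : Real.cosh (a - b) ≤ Real.cosh c := by
      rw [Real.cosh_le_cosh, abs_of_nonneg hC]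
      exact abs_le.2 ⟨by linarith, htri2⟩
    rw [Real.cosh_sub] at h1
    rw [hK_def, div_le_one (by positivity)]
    linarith
  have hKm1 : -1 ≤ K := by
    have h1 : Real.cosh c ≤ Real.cosh (a + b) := by
      rw [Real.cosh_le_cosh, abs_of_nonneg hC, abs_of_nonneg (by linarith : (0:ℝ) ≤ a + b)]
      exact htri1
    rw [Real.cosh_add] at h1
    rw [hK_def, le_div_iff₀ (by positivity)]
    linarith
  -- comparison configuration
  set cs := Real.sqrt ((1+K)/2) with hcs_def
  set sn := Real.sqrt ((1-K)/2) with hsn_def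
  have hcs2 : cs^2 = (1+K)/2 := Real.sq_sqrt (by linarith)
  have hsn2 : sn^2 = (1-K)/2 := Real.sq_sqrt (by linarith)
  have hsum : cs^2 + sn^2 = 1 := by rw [hcs2, hsn2]; ring
  have hKdiff : cs^2 - sn^2 = K := by rw [hcs2, hsn2]; ring
  have hpos1 : 0 < cs^2 + sn^2 := by rw [hsum]; norm_num
  have h10 : 0 < (1:ℝ)^2 + 0^2 := by norm_num
  -- side Y'X' along vertical, Y'Z' along rotated geodesic
  have hYX : dist (ptg 1 0 0 h10) (ptg 1 0 a h10) = a := by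
    rw [dist_ptg_same, abs_of_nonpos (by linarith : (0:ℝ) - a ≤ 0)]; ring
  have hYZ : dist (ptg 1 0 0 h10) (ptg cs sn b hpos1) = b := by
    rw [← ptg_zero cs sn hpos1 h10, dist_ptg_same,
      abs_of_nonpos (by linarith : (0:ℝ) - b ≤ 0)]; ring
  have hXZ : dist (ptg 1 0 a h10) (ptg cs sn b hpos1) = c := by
    have h1 : Real.cosh (dist (ptg 1 0 a h10) (ptg cs sn b hpos1)) = Real.cosh c := by
      rw [cosh_dist_ptg_vert cs sn a b hpos1 h10 hsum, hKdiff]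
      linarith [hKc]
    have le1 := Real.cosh_le_cosh.1 h1.le
    have le2 := Real.cosh_le_cosh.1 h1.ge
    have := le_antisymm le1 le2
    rwa [abs_of_nonneg dist_nonneg, abs_of_nonneg hC] at this
  -- the scale-s estimate
  have hKs : ∀ s : ℝ, 0 < s → s ≤ a → s ≤ b → s ≤ 1/2 → K ≤ 3 * s^2 := by
    intro s hs hsA hsB hs12
    obtain ⟨p, hpd, hpb⟩ := hgeo y x (s/a) ⟨by positivity, by rw [div_le_one hA]; exact hsA⟩
    obtain ⟨q, hqd, hqb⟩ := hgeo y z (s/b) ⟨by positivity, by rw [div_le_one hB]; exact hsB⟩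
    rw [← ha_def] at hpd
    rw [← hb_def] at hqd
    have hpd' : dist y p = s := by rw [hpd]; field_simp
    have hqd' : dist y q = s := by rw [hqd]; field_simp
    have hpy : p ≠ y := by
      intro h; rw [h, dist_self] at hpd'; linarith
    have hqy : q ≠ y := by
      intro h; rw [h, dist_self] at hqd'; linarith
    have hstep1 := pythagoras_of_angle hang hpb hqb hpy hqy
    rw [hpd', hqd'] at hstep1
    -- comparison points
    have hYP : dist (ptg 1 0 0 h10) (ptg 1 0 s h10) = s := by
      rw [dist_ptg_same, abs_of_nonpos (by linarith : (0:ℝ) - s ≤ 0)]; ring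
    have hYQ : dist (ptg 1 0 0 h10) (ptg cs sn s hpos1) = s := by
      rw [← ptg_zero cs sn hpos1 h10, dist_ptg_same,
        abs_of_nonpos (by linarith : (0:ℝ) - s ≤ 0)]; ring
    have hbtwP : MetricBtw (ptg 1 0 0 h10) (ptg 1 0 s h10) (ptg 1 0 a h10) :=
      btw_ptg 1 0 h10 hs.le hsA
    have hbtwQ : MetricBtw (ptg 1 0 0 h10) (ptg cs sn s hpos1) (ptg cs sn b hpos1) := by
      have h := btw_ptg cs sn hpos1 hs.le hsB
      rwa [ptg_zero cs sn hpos1 h10] at h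
    have hcomp := hcat y x z p q hpb hqb (ptg 1 0 0 h10) (ptg 1 0 a h10) (ptg cs sn b hpos1)
      (ptg 1 0 s h10) (ptg cs sn s hpos1)
      (by rw [hYX]) (by rw [hYZ]) (by rw [hXZ])
      hbtwP (by rw [hYP, hpd']) hbtwQ (by rw [hYQ, hqd'])
    -- d' := dist between comparison points
    set d' := dist (ptg 1 0 s h10) (ptg cs sn s hpos1) with hd'_def
    have hd'cosh : Real.cosh d' = Real.cosh s * Real.cosh s - K * (Real.sinh s * Real.sinh s) := by
      rw [hd'_def, cosh_dist_ptg_vert cs sn s s hpos1 h10 hsum, hKdiff]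
    have hd'sq : 2 * s^2 ≤ d'^2 := by
      have h1 : dist p q ^ 2 ≤ d'^2 := by
        apply pow_le_pow_left₀ dist_nonneg hcomp
      linarith
    have hsqrt : Real.sqrt 2 * s ≤ d' := by
      have h1 : Real.sqrt (2 * s^2) ≤ Real.sqrt (d'^2) := Real.sqrt_le_sqrt hd'sq
      rwa [Real.sqrt_sq dist_nonneg, Real.sqrt_mul (by norm_num) (s^2),
        Real.sqrt_sq hs.le] at h1
    have hcosh2 : Real.cosh (Real.sqrt 2 * s) ≤ Real.cosh d' := by
      rw [Real.cosh_le_cosh, abs_of_nonneg (by positivity), abs_of_nonneg dist_nonneg]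
      exact hsqrt
    have hlb : 1 + s^2 ≤ Real.cosh (Real.sqrt 2 * s) := by
      have := cosh_quad_lb (x := Real.sqrt 2 * s) (by positivity)
      have h2 : (Real.sqrt 2 * s)^2 = 2 * s^2 := by
        rw [mul_pow, Real.sq_sqrt (by norm_num : (0:ℝ) ≤ 2)]
      linarith [h2 ▸ this]
    have hub : Real.cosh s ≤ 1 + s^2/2 + s^4 := cosh_quad_ub (by
      rw [abs_of_nonneg hs.le]; linarith)
    have hsinh : s ≤ Real.sinh s := Real.self_le_sinh_iff.2 hs.le
    have hcosh1 : 1 ≤ Real.cosh s := Real.one_le_cosh s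
    -- combine
    rcases le_or_gt K 0 with hK0 | hK0
    · exact le_trans hK0 (by positivity)
    · have hBB : s^2 ≤ Real.sinh s * Real.sinh s := by
        rw [pow_two]
        exact mul_le_mul hsinh hsinh hs.le (hs.le.trans hsinh)
      have h3 : K * s^2 ≤ K * (Real.sinh s * Real.sinh s) :=
        mul_le_mul_of_nonneg_left hBB hK0.le
      have h4 : K * (Real.sinh s * Real.sinh s) ≤
          Real.cosh s * Real.cosh s - Real.cosh (Real.sqrt 2 * s) := by linarith
      have h5 : Real.cosh s * Real.cosh s - Real.cosh (Real.sqrt 2 * s) ≤ 3 * s^4 :=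
        quart_bound hs hs12 hcosh1 hub hlb
      have h6 : K * s^2 ≤ 3 * s^4 := by linarith
      have := mul_le_mul_of_nonneg_right h6 (le_of_lt (inv_pos.2 (by positivity : (0:ℝ) < s^2)))
      calc K = K * s^2 * (s^2)⁻¹ := by field_simp
        _ ≤ 3 * s^4 * (s^2)⁻¹ := this
        _ = 3 * s^2 := by field_simp
  -- conclude K ≤ 0
  have hK0 : K ≤ 0 := by
    by_contra h
    push_neg at h
    set s0 := min (min a b) (min (1/2) (Real.sqrt (K/6))) with hs0_def
    have hs0pos : 0 < s0 := by
      apply lt_min (lt_min hA hB)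
      apply lt_min (by norm_num)
      exact Real.sqrt_pos.2 (by linarith)
    have hs0a : s0 ≤ a := le_trans (min_le_left _ _) (min_le_left _ _)
    have hs0b : s0 ≤ b := le_trans (min_le_left _ _) (min_le_right _ _)
    have hs0h : s0 ≤ 1/2 := le_trans (min_le_right _ _) (min_le_left _ _)
    have hs0k : s0 ≤ Real.sqrt (K/6) := le_trans (min_le_right _ _) (min_le_right _ _)
    have h1 := hKs s0 hs0pos hs0a hs0b hs0h
    have h2 : s0^2 ≤ K/6 := by
      have := pow_le_pow_left₀ hs0pos.le hs0k 2
      rwa [Real.sq_sqrt (by linarith : (0:ℝ) ≤ K/6)] at this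
    linarith
  have hfin : K * (Real.sinh a * Real.sinh b) ≤ 0 :=
    mul_nonpos_of_nonpos_of_nonneg hK0 (mul_pos hsa hsb).le
  linarith



end AuxCatMinusOne

/-- In a CAT(-1) space, for a sequence of geodesic triangles `Δ(xₙ, yₙ, zₙ)` with
Alexandrov angle at `yₙ` at least `π/2`, `d(xₙ,yₙ) → ∞` and
`d(xₙ,zₙ) − d(xₙ,yₙ) → 0`, one has `d(yₙ,zₙ) → 0`. -/
theorem cat_minus_one_shrinking {X : Type*} [MetricSpace X]
    (hgeo : IsGeodesicSpace X) (hcat : IsCatMinusOne X)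
    (x y z : ℕ → X)
    (hang : ∀ n, Real.pi / 2 ≤ alexAngle (y n) (x n) (z n))
    (h1 : Filter.Tendsto (fun n => dist (x n) (y n)) Filter.atTop Filter.atTop)
    (h2 : Filter.Tendsto (fun n => dist (x n) (z n) - dist (x n) (y n))
      Filter.atTop (nhds 0)) :
    Filter.Tendsto (fun n => dist (y n) (z n)) Filter.atTop (nhds 0) := by
  have hbound : ∀ n, dist (y n) (z n) ≤
      Real.sqrt (2 * (Real.exp (dist (x n) (z n) - dist (x n) (y n)) - 1)) := by
    intro n
    have hk := hyp_pyth hgeo hcat (x n) (y n) (z n) (hang n)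
    rw [dist_comm (y n) (x n)] at hk
    set a := dist (x n) (y n) with ha_def
    set b := dist (y n) (z n) with hb_def
    set c := dist (x n) (z n) with hc_def
    have hca : Real.cosh a ≤ Real.cosh c := by
      have h3 : Real.cosh a * 1 ≤ Real.cosh a * Real.cosh b :=
        mul_le_mul_of_nonneg_left (Real.one_le_cosh b) (Real.cosh_pos a).le
      linarith
    have hac : a ≤ c := by
      have h := Real.cosh_le_cosh.1 hca
      rwa [abs_of_nonneg dist_nonneg, abs_of_nonneg dist_nonneg] at h
    have hexp : Real.cosh c ≤ Real.exp (c - a) * Real.cosh a := by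
      have e1 : Real.exp (c-a) * Real.exp a = Real.exp c := by
        rw [← Real.exp_add]; ring_nf
      have e2 : Real.exp (c-a) * Real.exp (-a) = Real.exp (c-2*a) := by
        rw [← Real.exp_add]; ring_nf
      have h3 : Real.exp (-c) ≤ Real.exp (c - 2*a) := Real.exp_le_exp.2 (by linarith)
      rw [Real.cosh_eq, Real.cosh_eq]
      have h4 : Real.exp (c-a) * ((Real.exp a + Real.exp (-a))/2)
          = (Real.exp (c-a) * Real.exp a + Real.exp (c-a) * Real.exp (-a))/2 := by ring
      rw [h4, e1, e2]
      linarith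
    have hcoshb : Real.cosh b ≤ Real.exp (c - a) := by
      have h5 := hk.trans hexp
      rw [mul_comm (Real.cosh a) (Real.cosh b)] at h5
      exact le_of_mul_le_mul_right h5 (Real.cosh_pos a)
    have hb2 : b^2 ≤ 2 * (Real.exp (c-a) - 1) := by
      have := cosh_quad_lb (dist_nonneg : (0:ℝ) ≤ b)
      linarith
    calc b = Real.sqrt (b^2) := (Real.sqrt_sq dist_nonneg).symm
      _ ≤ _ := Real.sqrt_le_sqrt hb2
  have hgc : Continuous (fun t : ℝ => Real.sqrt (2 * (Real.exp t - 1))) := by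
    continuity
  have hg := (hgc.tendsto 0).comp h2
  have hg0 : Real.sqrt (2 * (Real.exp 0 - 1)) = 0 := by
    rw [Real.exp_zero]; simp
  rw [hg0] at hg
  exact squeeze_zero (fun n => dist_nonneg) hbound hg
end

section
/- Let X be a complete CAT(0) space, K ⊆ X closed convex, T: K → K nonexpansive, and suppose (xₙ) ⊂ K is a bounded sequence with d(xₙ, T xₙ) → 0. Then the asymptotic center of (xₙ) is a fixed point of T. -/
noncomputable def pt2 (u v : ℝ) : EuclideanSpace ℝ (Fin 2) := WithLp.toLp 2 ![u, v]

lemma dist_pt2 (u v u' v' : ℝ) :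
    dist (pt2 u v) (pt2 u' v') = Real.sqrt ((u - u')^2 + (v - v')^2) := by
  rw [EuclideanSpace.dist_eq]
  simp [pt2, Fin.sum_univ_two, Real.dist_eq, sq_abs]

lemma exists_triangle (d1 d2 d3 : ℝ) (h2 : 0 ≤ d2) (h3 : 0 ≤ d3)
    (t1 : d3 ≤ d1 + d2) (t2 : d1 ≤ d2 + d3) (t3 : d2 ≤ d1 + d3) (hd1 : 0 < d1) :
    ∃ x' y' z' : EuclideanSpace ℝ (Fin 2),
      dist x' y' = d1 ∧ dist x' z' = d2 ∧ dist y' z' = d3 := by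
  set u : ℝ := (d2^2 + d1^2 - d3^2) / (2 * d1) with hu
  have husq : u^2 ≤ d2^2 := by
    rw [hu, div_pow, div_le_iff₀ (by positivity)]
    have key : (2 * d1 * d2)^2 - (d2^2 + d1^2 - d3^2)^2
        = (d1 + d2 - d3) * (d1 + d2 + d3) * (d1 + d3 - d2) * (d2 + d3 - d1) := by ring
    nlinarith [mul_nonneg (mul_nonneg (mul_nonneg (by linarith : (0:ℝ) ≤ d1 + d2 - d3)
      (by linarith : (0:ℝ) ≤ d1 + d2 + d3)) (by linarith : (0:ℝ) ≤ d1 + d3 - d2))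
      (by linarith : (0:ℝ) ≤ d2 + d3 - d1)]
  set v : ℝ := Real.sqrt (d2^2 - u^2) with hv
  have hv2 : v^2 = d2^2 - u^2 := Real.sq_sqrt (by linarith)
  refine ⟨pt2 0 0, pt2 d1 0, pt2 u v, ?_, ?_, ?_⟩
  · rw [dist_pt2]
    rw [show (0 - d1)^2 + (0-0)^2 = d1^2 by ring, Real.sqrt_sq hd1.le]
  · rw [dist_pt2]
    rw [show (0 - u)^2 + (0 - v)^2 = d2^2 by nlinarith, Real.sqrt_sq h2]
  · rw [dist_pt2]
    have : (d1 - u)^2 + (0 - v)^2 = d3^2 := by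
      have : u * (2 * d1) = d2^2 + d1^2 - d3^2 := by
        rw [hu]; field_simp
      nlinarith
    rw [this, Real.sqrt_sq h3]

lemma cn_ineq {X : Type*} [MetricSpace X] (hcat : IsCatZero X)
    (b c z : X) (t : ℝ) (ht0 : 0 ≤ t) (ht1 : t ≤ 1)
    (p : X) (hbtw : MetricBtw b p c) (hdp : dist b p = t * dist b c) :
    dist z p ^ 2 ≤ (1 - t) * dist z b ^ 2 + t * dist z c ^ 2
      - t * (1 - t) * dist b c ^ 2 := by
  rcases eq_or_lt_of_le (dist_nonneg (x := b) (y := c)) with hbc | hbc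
  · -- degenerate: b = c, p = b
    have hbc' : b = c := by rw [← dist_eq_zero, ← hbc]
    have hp : p = b := by
      have h0 : dist b p = 0 := by rw [hdp, ← hbc]; ring
      rw [← dist_eq_zero, dist_comm]; exact h0
    have hzp : dist z p = dist z b := by rw [hp]
    have hzc : dist z c = dist z b := by rw [← hbc']
    rw [hzp, hzc, ← hbc]
    nlinarith [sq_nonneg (dist z b)]
  · obtain ⟨x', y', z', e1, e2, e3⟩ :=
      exists_triangle (dist b c) (dist b z) (dist c z) dist_nonneg dist_nonneg
        (by simpa [dist_comm] using dist_triangle c b z)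
        (by simpa [dist_comm] using dist_triangle b z c)
        (by simpa [dist_comm] using dist_triangle b c z) hbc
    set p' : EuclideanSpace ℝ (Fin 2) := x' + t • (y' - x') with hp'
    have hxp : dist x' p' = t * dist x' y' := by
      rw [dist_eq_norm, hp']
      have : x' - (x' + t • (y' - x')) = t • (x' - y') := by module
      rw [this, norm_smul, Real.norm_eq_abs, abs_of_nonneg ht0, dist_eq_norm]
    have hpy : dist p' y' = (1 - t) * dist x' y' := by
      rw [dist_eq_norm, hp']
      have : x' + t • (y' - x') - y' = (1 - t) • (x' - y') := by module
      rw [this, norm_smul, Real.norm_eq_abs, abs_of_nonneg (by linarith), dist_eq_norm]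
    have hbtw' : MetricBtw x' p' y' := by
      unfold MetricBtw; rw [hxp, hpy]; ring
    have hq : MetricBtw b z z := by unfold MetricBtw; simp
    have hq' : MetricBtw x' z' z' := by unfold MetricBtw; simp
    have key := hcat b c z p z hbtw hq x' y' z' p' z' e1 e2 e3 hbtw'
      (by rw [hxp, e1, hdp]) hq' e2
    have hle : dist z p ≤ dist p' z' := by rw [dist_comm]; exact key
    have hsq : dist z p ^ 2 ≤ dist p' z' ^ 2 := by
      have := dist_nonneg (x := z) (y := p)
      nlinarith [dist_nonneg (x := p') (y := z')]
    refine hsq.trans_eq ?_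
    have hA : p' - z' = (1 - t) • (x' - z') + t • (y' - z') := by
      rw [hp']; module
    rw [dist_eq_norm, hA, norm_add_sq_real, norm_smul, norm_smul, real_inner_smul_left,
      real_inner_smul_right, Real.norm_eq_abs, Real.norm_eq_abs,
      abs_of_nonneg ht0, abs_of_nonneg (by linarith : (0:ℝ) ≤ 1 - t)]
    have eA : ‖x' - z'‖ = dist z b := by rw [← dist_eq_norm, e2, dist_comm]
    have eB : ‖y' - z'‖ = dist z c := by rw [← dist_eq_norm, e3, dist_comm]
    have eAB : ‖x' - z' - (y' - z')‖ = dist b c := by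
      have : x' - z' - (y' - z') = x' - y' := by module
      rw [this, ← dist_eq_norm, e1]
    have inner_eq : (inner ℝ (x' - z') (y' - z') : ℝ)
        = (‖x' - z'‖^2 + ‖y' - z'‖^2 - dist b c ^2) / 2 := by
      have := norm_sub_sq_real (x' - z') (y' - z')
      rw [eAB] at this
      linarith
    rw [inner_eq, eA, eB]
    ring

lemma exists_nearest {X : Type*} [MetricSpace X] [CompleteSpace X]
    (hgeo : IsGeodesicSpace X) (hcat : IsCatZero X)
    (K : Set X) (hcl : IsClosed K) (hconv : MetricConvex K)
    (hne : K.Nonempty) (a : X) :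
    ∃ b ∈ K, ∀ c ∈ K, dist a b ≤ dist a c := by
  set S : Set ℝ := (fun y => dist a y) '' K with hS
  have hSne : S.Nonempty := hne.image _
  have hSbd : BddBelow S := ⟨0, fun s hs => by
    obtain ⟨y, _, rfl⟩ := hs; exact dist_nonneg⟩
  set δ : ℝ := sInf S with hδ
  have hδ0 : 0 ≤ δ := le_csInf hSne fun s hs => by
    obtain ⟨y, _, rfl⟩ := hs; exact dist_nonneg
  have hδle : ∀ c ∈ K, δ ≤ dist a c := fun c hc => csInf_le hSbd ⟨c, hc, rfl⟩
  have H : ∀ n : ℕ, ∃ y ∈ K, dist a y < δ + 1 / (n + 1) := by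
    intro n
    have hlt : δ < δ + 1 / (n + 1) := by
      have : (0:ℝ) < 1 / (n + 1) := by positivity
      linarith
    obtain ⟨s, hs, hslt⟩ := exists_lt_of_csInf_lt hSne hlt
    obtain ⟨y, hy, rfl⟩ := hs
    exact ⟨y, hy, hslt⟩
  choose y hyK hyd using H
  -- Cauchy
  have key : ∀ N m n : ℕ, N ≤ m → N ≤ n →
      dist (y m) (y n) ≤ Real.sqrt (8 * δ / (N + 1) + 4 / (N + 1) ^ 2) := by
    intro N m n hm hn
    obtain ⟨p, hdp, hbtw⟩ := hgeo (y m) (y n) (1/2) ⟨by norm_num, by norm_num⟩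
    have hpK : p ∈ K := hconv _ (hyK m) _ (hyK n) p hbtw
    have hcn := cn_ineq hcat (y m) (y n) a (1/2) (by norm_num) (by norm_num) p hbtw hdp
    have hδp : δ ≤ dist a p := hδle p hpK
    set e : ℝ := 1 / ((N:ℝ) + 1) with he
    have hepos : (0:ℝ) < e := by rw [he]; positivity
    have em : (1:ℝ) / (m + 1) ≤ e := by
      rw [he]
      apply one_div_le_one_div_of_le (by positivity)
      have : (N:ℝ) ≤ m := Nat.cast_le.2 hm
      linarith
    have en : (1:ℝ) / (n + 1) ≤ e := by
      rw [he]
      apply one_div_le_one_div_of_le (by positivity)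
      have : (N:ℝ) ≤ n := Nat.cast_le.2 hn
      linarith
    have hm'' : dist a (y m) ≤ δ + e := by linarith [hyd m]
    have hn'' : dist a (y n) ≤ δ + e := by linarith [hyd n]
    have hgoal : 8 * δ / ((N:ℝ) + 1) + 4 / ((N:ℝ) + 1) ^ 2 = 8 * δ * e + 4 * e ^ 2 := by
      rw [he]; field_simp
    have hsq : dist (y m) (y n) ^ 2 ≤ 8 * δ * e + 4 * e ^ 2 := by
      nlinarith [mul_self_le_mul_self (dist_nonneg (x := a) (y := y m)) hm'',
        mul_self_le_mul_self (dist_nonneg (x := a) (y := y n)) hn'',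
        mul_self_le_mul_self hδ0 hδp]
    have h1 : dist (y m) (y n) = Real.sqrt (dist (y m) (y n) ^ 2) :=
      (Real.sqrt_sq dist_nonneg).symm
    rw [h1]
    push_cast
    rw [hgoal]
    exact Real.sqrt_le_sqrt hsq
  have hcauchy : CauchySeq y := by
    refine cauchySeq_of_le_tendsto_0
      (fun N : ℕ => Real.sqrt (8 * δ / (N + 1) + 4 / (N + 1) ^ 2))
      (fun n m N hn hm => key N n m hn hm) ?_
    have t1 : Filter.Tendsto (fun N : ℕ => (1:ℝ) / ((N:ℝ) + 1)) Filter.atTop (nhds 0) :=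
      tendsto_one_div_add_atTop_nhds_zero_nat
    have h0 : Filter.Tendsto (fun N : ℕ => 8 * δ / ((N:ℝ) + 1) + 4 / ((N:ℝ) + 1) ^ 2)
        Filter.atTop (nhds 0) := by
      have heq : (fun N : ℕ => 8 * δ / ((N:ℝ) + 1) + 4 / ((N:ℝ) + 1) ^ 2)
          = fun N : ℕ => 8 * δ * ((1:ℝ) / ((N:ℝ) + 1))
            + 4 * (((1:ℝ) / ((N:ℝ) + 1)) * ((1:ℝ) / ((N:ℝ) + 1))) := by
        funext N
        have hne2 : ((N:ℝ) + 1) ≠ 0 := by positivity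
        field_simp
      rw [heq]
      simpa using (t1.const_mul (8 * δ)).add ((t1.mul t1).const_mul 4)
    have := (Real.continuous_sqrt.tendsto 0).comp h0
    simpa [Function.comp_def] using this
  obtain ⟨b, hbl⟩ := cauchySeq_tendsto_of_complete hcauchy
  have hbK : b ∈ K := hcl.mem_of_tendsto hbl (Filter.Eventually.of_forall hyK)
  refine ⟨b, hbK, fun c hc => ?_⟩
  have hdb : Filter.Tendsto (fun n => dist a (y n)) Filter.atTop (nhds (dist a b)) :=
    tendsto_const_nhds.dist hbl
  have hlim : Filter.Tendsto (fun n : ℕ => δ + 1 / ((n:ℝ) + 1)) Filter.atTop (nhds δ) := by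
    simpa using tendsto_const_nhds.add (tendsto_one_div_add_atTop_nhds_zero_nat (𝕜 := ℝ))
  have hle : dist a b ≤ δ :=
    le_of_tendsto_of_tendsto' hdb hlim (fun n => (hyd n).le)
  exact hle.trans (hδle c hc)

lemma proj_sq_ineq {X : Type*} [MetricSpace X]
    (hgeo : IsGeodesicSpace X) (hcat : IsCatZero X)
    (K : Set X) (hconv : MetricConvex K) (a b : X) (hbK : b ∈ K)
    (hmin : ∀ c ∈ K, dist a b ≤ dist a c) (c : X) (hcK : c ∈ K) :
    dist a b ^ 2 + dist b c ^ 2 ≤ dist a c ^ 2 := by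
  have step : ∀ n : ℕ,
      dist a b ^ 2 + (1 - 1 / ((n:ℝ) + 1)) * dist b c ^ 2 ≤ dist a c ^ 2 := by
    intro n
    set t : ℝ := 1 / ((n:ℝ) + 1) with htdef
    have ht0 : 0 < t := by rw [htdef]; positivity
    have ht1 : t ≤ 1 := by
      rw [htdef]
      rw [div_le_one (by positivity)]
      have : (0:ℝ) ≤ n := Nat.cast_nonneg n
      linarith
    obtain ⟨p, hdp, hbtw⟩ := hgeo b c t ⟨ht0.le, ht1⟩
    have hpK : p ∈ K := hconv b hbK c hcK p hbtw
    have hcn := cn_ineq hcat b c a t ht0.le ht1 p hbtw hdp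
    have h1 : dist a b ≤ dist a p := hmin p hpK
    have h2 : dist a b ^ 2 ≤ dist a p ^ 2 := by
      nlinarith [dist_nonneg (x := a) (y := b)]
    have h3 : t * (dist a b ^ 2 + (1 - t) * dist b c ^ 2) ≤ t * dist a c ^ 2 := by
      nlinarith
    exact le_of_mul_le_mul_left h3 ht0
  have hlim : Filter.Tendsto
      (fun n : ℕ => dist a b ^ 2 + (1 - 1 / ((n:ℝ) + 1)) * dist b c ^ 2)
      Filter.atTop (nhds (dist a b ^ 2 + dist b c ^ 2)) := by
    have t1 := tendsto_one_div_add_atTop_nhds_zero_nat (𝕜 := ℝ)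
    have h : Filter.Tendsto
        (fun n : ℕ => dist a b ^ 2 + (1 - 1 / ((n:ℝ) + 1)) * dist b c ^ 2)
        Filter.atTop (nhds (dist a b ^ 2 + (1 - 0) * dist b c ^ 2)) :=
      tendsto_const_nhds.add ((tendsto_const_nhds.sub t1).mul tendsto_const_nhds)
    simpa using h
  exact le_of_tendsto' hlim step

/-- In a complete CAT(0) space, the asymptotic center of a bounded approximate
fixed point sequence of a nonexpansive map `T : K → K` (K closed convex) is a
fixed point of `T`. -/
theorem asymptotic_center_fixed {X : Type*} [MetricSpace X] [CompleteSpace X]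
    (hgeo : IsGeodesicSpace X) (hcat : IsCatZero X)
    (K : Set X) (hcl : IsClosed K) (hconv : MetricConvex K)
    (T : X → X) (hT : Set.MapsTo T K K)
    (hnon : ∀ x ∈ K, ∀ y ∈ K, dist (T x) (T y) ≤ dist x y)
    (x : ℕ → X) (hxK : ∀ n, x n ∈ K) (C : ℝ) (hb : ∀ n, dist (x 0) (x n) ≤ C)
    (happrox : Filter.Tendsto (fun n => dist (x n) (T (x n)))
      Filter.atTop (nhds 0))
    (a : X)
    (ha : ∀ y : X,
      Filter.limsup (fun n => dist a (x n)) Filter.atTop ≤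
        Filter.limsup (fun n => dist y (x n)) Filter.atTop) :
    T a = a := by
  classical
  set f : X → ℕ → ℝ := fun y n => dist y (x n) with hf
  have hbound : ∀ y n, f y n ≤ dist y (x 0) + C := fun y n =>
    (dist_triangle y (x 0) (x n)).trans (by linarith [hb n])
  have hbdd : ∀ y, Filter.IsBoundedUnder (· ≤ ·) Filter.atTop (f y) :=
    fun y => Filter.isBoundedUnder_of ⟨dist y (x 0) + C, fun n => hbound y n⟩
  have hbelow : ∀ y, Filter.IsBoundedUnder (· ≥ ·) Filter.atTop (f y) :=
    fun y => Filter.isBoundedUnder_of ⟨0, fun n => dist_nonneg⟩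
  have hcob : ∀ y, Filter.IsCoboundedUnder (· ≤ ·) Filter.atTop (f y) :=
    fun y => (hbelow y).isCoboundedUnder_le
  set r : X → ℝ := fun y => Filter.limsup (f y) Filter.atTop with hr
  have hrnn : ∀ y, 0 ≤ r y := fun y =>
    Filter.le_limsup_of_frequently_le
      (Filter.Frequently.of_forall fun n => dist_nonneg) (hbdd y)
  have hmono : Monotone (fun z : ℝ => z * |z|) := by
    intro p q hpq
    dsimp only
    rcases le_total 0 p with hp | hp
    · rw [abs_of_nonneg hp, abs_of_nonneg (hp.trans hpq)]
      exact mul_self_le_mul_self hp hpq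
    · rw [abs_of_nonpos hp]
      rcases le_total 0 q with hq | hq
      · rw [abs_of_nonneg hq]; nlinarith
      · rw [abs_of_nonpos hq]; nlinarith
  have hcont : Continuous (fun z : ℝ => z * |z|) := continuous_id.mul continuous_abs
  have hsq : ∀ y, Filter.limsup (fun n => f y n ^ 2) Filter.atTop = r y ^ 2 := by
    intro y
    have hmain := hmono.map_limsup_of_continuousAt (F := Filter.atTop) (f y)
      hcont.continuousAt (hbdd y) (hcob y)
    have e1 : ((fun z : ℝ => z * |z|) ∘ f y) = fun n => f y n ^ 2 := by
      funext n
      simp only [Function.comp]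
      rw [abs_of_nonneg (dist_nonneg : (0:ℝ) ≤ f y n), sq]
    rw [e1] at hmain
    rw [← hmain, abs_of_nonneg (hrnn y), sq]
  have hbdd2 : ∀ y, Filter.IsBoundedUnder (· ≤ ·) Filter.atTop (fun n => f y n ^ 2) :=
    fun y => Filter.isBoundedUnder_of ⟨(dist y (x 0) + C) ^ 2, fun n => by
      have h1 := hbound y n
      have h2 : (0:ℝ) ≤ f y n := dist_nonneg
      nlinarith⟩
  have hcob2 : ∀ y, Filter.IsCoboundedUnder (· ≤ ·) Filter.atTop (fun n => f y n ^ 2) :=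
    fun y => Filter.IsBoundedUnder.isCoboundedUnder_le
      (Filter.isBoundedUnder_of ⟨0, fun n => sq_nonneg _⟩)
  -- Step A : a ∈ K
  obtain ⟨b, hbK, hmin⟩ := exists_nearest hgeo hcat K hcl hconv ⟨x 0, hxK 0⟩ a
  have hproj : ∀ n, dist a b ^ 2 + f b n ^ 2 ≤ f a n ^ 2 := fun n =>
    proj_sq_ineq hgeo hcat K hconv a b hbK hmin (x n) (hxK n)
  have hstepA : dist a b ^ 2 + r b ^ 2 ≤ r a ^ 2 := by
    have h1 : Filter.limsup (fun n => dist a b ^ 2 + f b n ^ 2) Filter.atTop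
        = dist a b ^ 2 + r b ^ 2 := by
      rw [limsup_const_add Filter.atTop (fun n => f b n ^ 2) _ (hbdd2 b) (hcob2 b),
        hsq b]
    have hcobL : Filter.IsCoboundedUnder (· ≤ ·) Filter.atTop
        (fun n => dist a b ^ 2 + f b n ^ 2) :=
      Filter.IsBoundedUnder.isCoboundedUnder_le
        (Filter.isBoundedUnder_of ⟨0, fun n => add_nonneg (sq_nonneg _) (sq_nonneg _)⟩)
    calc dist a b ^ 2 + r b ^ 2
        = Filter.limsup (fun n => dist a b ^ 2 + f b n ^ 2) Filter.atTop := h1.symm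
      _ ≤ Filter.limsup (fun n => f a n ^ 2) Filter.atTop :=
          Filter.limsup_le_limsup (Filter.Eventually.of_forall hproj) hcobL (hbdd2 a)
      _ = r a ^ 2 := hsq a
  have haK : a ∈ K := by
    have hra : r a ≤ r b := ha b
    have h2 : r a ^ 2 ≤ r b ^ 2 := by nlinarith [hrnn a, hrnn b]
    have h3 : dist a b = 0 := by nlinarith [dist_nonneg (x := a) (y := b)]
    rw [dist_eq_zero] at h3
    rw [h3]; exact hbK
  -- Step B : r (T a) ≤ r a
  have hTb : r (T a) ≤ r a := by
    refine le_of_forall_pos_le_add fun ε hε => ?_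
    have hev : ∀ᶠ n in Filter.atTop, f (T a) n ≤ f a n + ε := by
      filter_upwards [happrox.eventually (gt_mem_nhds hε)] with n hn
      calc dist (T a) (x n)
          ≤ dist (T a) (T (x n)) + dist (T (x n)) (x n) := dist_triangle _ _ _
        _ ≤ dist a (x n) + ε := by
            have h4 := hnon a haK (x n) (hxK n)
            rw [dist_comm (T (x n)) (x n)]
            linarith
    have h2 : Filter.limsup (fun n => f a n + ε) Filter.atTop = r a + ε :=
      limsup_add_const Filter.atTop (f a) ε (hbdd a) (hcob a)
    calc r (T a)
        ≤ Filter.limsup (fun n => f a n + ε) Filter.atTop :=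
          Filter.limsup_le_limsup hev (hcob (T a))
            (Filter.isBoundedUnder_of ⟨dist a (x 0) + C + ε,
              fun n => by linarith [hbound a n]⟩)
      _ = r a + ε := h2
  have hTeq : r (T a) = r a := le_antisymm hTb (ha (T a))
  -- Step C : midpoint argument
  obtain ⟨m, hdm, hbtwm⟩ := hgeo a (T a) (1/2) ⟨by norm_num, by norm_num⟩
  set c : ℝ := -(1/4) * dist a (T a) ^ 2 with hc
  set u : ℕ → ℝ := fun n => ((1:ℝ)/2) * f a n ^ 2 with hu
  set v : ℕ → ℝ := fun n => ((1:ℝ)/2) * f (T a) n ^ 2 with hv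
  set Bu : ℝ := ((1:ℝ)/2) * (dist a (x 0) + C) ^ 2 with hBu
  set Bv : ℝ := ((1:ℝ)/2) * (dist (T a) (x 0) + C) ^ 2 with hBv
  have hBu' : ∀ n, u n ≤ Bu := fun n => by
    have h1 := hbound a n
    have h2 : (0:ℝ) ≤ f a n := dist_nonneg
    rw [hu, hBu]; dsimp only; nlinarith
  have hBv' : ∀ n, v n ≤ Bv := fun n => by
    have h1 := hbound (T a) n
    have h2 : (0:ℝ) ≤ f (T a) n := dist_nonneg
    rw [hv, hBv]; dsimp only; nlinarith
  have hcnm : ∀ n, f m n ^ 2 ≤ (u + v) n + c := by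
    intro n
    have hcn := cn_ineq hcat a (T a) (x n) (1/2) (by norm_num) (by norm_num) m hbtwm hdm
    have e1 : dist (x n) m = f m n := dist_comm _ _
    have e2 : dist (x n) a = f a n := dist_comm _ _
    have e3 : dist (x n) (T a) = f (T a) n := dist_comm _ _
    rw [e1, e2, e3] at hcn
    have : (u + v) n = ((1:ℝ)/2) * f a n ^ 2 + ((1:ℝ)/2) * f (T a) n ^ 2 := rfl
    rw [this, hc]
    linarith
  have hbu : Filter.IsBoundedUnder (· ≤ ·) Filter.atTop u :=
    Filter.isBoundedUnder_of ⟨Bu, hBu'⟩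
  have hbv : Filter.IsBoundedUnder (· ≤ ·) Filter.atTop v :=
    Filter.isBoundedUnder_of ⟨Bv, hBv'⟩
  have hcu : Filter.IsCoboundedUnder (· ≤ ·) Filter.atTop u :=
    Filter.IsBoundedUnder.isCoboundedUnder_le
      (Filter.isBoundedUnder_of ⟨0, fun n => by rw [hu]; positivity⟩)
  have hcv : Filter.IsCoboundedUnder (· ≤ ·) Filter.atTop v :=
    Filter.IsBoundedUnder.isCoboundedUnder_le
      (Filter.isBoundedUnder_of ⟨0, fun n => by rw [hv]; positivity⟩)
  have hbuv : Filter.IsBoundedUnder (· ≤ ·) Filter.atTop (u + v) :=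
    Filter.isBoundedUnder_of ⟨Bu + Bv, fun n => add_le_add (hBu' n) (hBv' n)⟩
  have hcuv : Filter.IsCoboundedUnder (· ≤ ·) Filter.atTop (u + v) :=
    Filter.IsBoundedUnder.isCoboundedUnder_le
      (Filter.isBoundedUnder_of ⟨0, fun n => by
        have h0u : 0 ≤ u n := by rw [hu]; positivity
        have h0v : 0 ≤ v n := by rw [hv]; positivity
        have : (u + v) n = u n + v n := rfl
        rw [this]; linarith⟩)
  have hhalfa : Filter.limsup u Filter.atTop = ((1:ℝ)/2) * r a ^ 2 := by
    have hmono2 : Monotone (fun z : ℝ => ((1:ℝ)/2) * z) := fun p q hpq => by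
      dsimp only; linarith
    have h6 := hmono2.map_limsup_of_continuousAt (F := Filter.atTop)
      (fun n => f a n ^ 2) (continuous_const.mul continuous_id).continuousAt
      (hbdd2 a) (hcob2 a)
    rw [hsq a] at h6
    exact h6.symm
  have hhalfb : Filter.limsup v Filter.atTop = ((1:ℝ)/2) * r (T a) ^ 2 := by
    have hmono2 : Monotone (fun z : ℝ => ((1:ℝ)/2) * z) := fun p q hpq => by
      dsimp only; linarith
    have h6 := hmono2.map_limsup_of_continuousAt (F := Filter.atTop)
      (fun n => f (T a) n ^ 2) (continuous_const.mul continuous_id).continuousAt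
      (hbdd2 (T a)) (hcob2 (T a))
    rw [hsq (T a)] at h6
    exact h6.symm
  have hm2 : r m ^ 2 ≤ ((1:ℝ)/2) * r a ^ 2 + ((1:ℝ)/2) * r (T a) ^ 2 + c := by
    calc r m ^ 2
        = Filter.limsup (fun n => f m n ^ 2) Filter.atTop := (hsq m).symm
      _ ≤ Filter.limsup (fun n => (u + v) n + c) Filter.atTop :=
          Filter.limsup_le_limsup (Filter.Eventually.of_forall hcnm) (hcob2 m)
            (Filter.isBoundedUnder_of ⟨Bu + Bv + c,
              fun n => by
                have : (u + v) n = u n + v n := rfl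
                rw [this]
                linarith [hBu' n, hBv' n]⟩)
      _ = Filter.limsup (u + v) Filter.atTop + c :=
          limsup_add_const Filter.atTop (u + v) c hbuv hcuv
      _ ≤ Filter.limsup u Filter.atTop + Filter.limsup v Filter.atTop + c := by
          have hgu : Filter.IsBoundedUnder (· ≥ ·) Filter.atTop u :=
            Filter.isBoundedUnder_of ⟨0, fun n => by
              rw [hu]; dsimp only; positivity⟩
          have := limsup_add_le hgu hbu hcv hbv
          linarith
      _ = ((1:ℝ)/2) * r a ^ 2 + ((1:ℝ)/2) * r (T a) ^ 2 + c := by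
          rw [hhalfa, hhalfb]
  have hram : r a ≤ r m := ha m
  have h7 : r a ^ 2 ≤ r m ^ 2 := by nlinarith [hrnn a, hrnn m]
  rw [hTeq] at hm2
  rw [hc] at hm2
  have h9 : dist a (T a) ^ 2 ≤ 0 := by linarith
  have h10 : dist a (T a) ^ 2 = 0 := le_antisymm h9 (sq_nonneg _)
  have h8 : dist a (T a) = 0 := sq_eq_zero_iff.mp h10
  rw [dist_eq_zero] at h8
  exact h8.symm
end

section
/- Let X be a complete CAT(-1) space, x₀ ∈ X, and r, ε > 0. Then there exists R > 0, depending only on r and ε, such that for all x, y ∈ X: if the metric projections u, v of x and y respectively onto the closed ball B̄(x₀, r) satisfy d(u,v) ≥ ε, then the geodesic segment [x,y] intersects the closed ball B̄(x₀, R). -/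
set_option maxHeartbeats 1000000 in
private lemma hD_pos (φ t : ℝ) : 0 < Real.cos φ ^ 2 + Real.exp t ^ 2 * Real.sin φ ^ 2 := by
  rcases eq_or_ne (Real.sin φ) 0 with h | h
  · have h1 := Real.sin_sq_add_cos_sq φ
    rw [h] at h1; simp only [h]; nlinarith
  · have h2 : 0 < Real.sin φ ^ 2 := by positivity
    have h3 : 0 < Real.exp t ^ 2 := by positivity
    nlinarith [sq_nonneg (Real.cos φ)]

/-- The point at arc length `t` along the geodesic ray in `ℍ` starting at `i`,
obtained by rotating the vertical geodesic by angle `φ` about `i`. -/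
private noncomputable def hpt (φ t : ℝ) : UpperHalfPlane :=
  ⟨⟨Real.sin φ * Real.cos φ * (1 - Real.exp t ^ 2) /
      (Real.cos φ ^ 2 + Real.exp t ^ 2 * Real.sin φ ^ 2),
    Real.exp t / (Real.cos φ ^ 2 + Real.exp t ^ 2 * Real.sin φ ^ 2)⟩,
    div_pos (Real.exp_pos t) (hD_pos φ t)⟩

private lemma hpt_re (φ t : ℝ) : (hpt φ t : ℂ).re =
    Real.sin φ * Real.cos φ * (1 - Real.exp t ^ 2) /
      (Real.cos φ ^ 2 + Real.exp t ^ 2 * Real.sin φ ^ 2) := rfl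

private lemma hpt_im (φ t : ℝ) : (hpt φ t : ℂ).im =
    Real.exp t / (Real.cos φ ^ 2 + Real.exp t ^ 2 * Real.sin φ ^ 2) := rfl

private lemma uhp_im_eq (z : UpperHalfPlane) : UpperHalfPlane.im z = (z : ℂ).im := rfl

private lemma hpt_zero (φ : ℝ) : hpt φ 0 = hpt 0 0 := by
  have h1 := Real.cos_sq_add_sin_sq φ
  apply UpperHalfPlane.ext
  apply Complex.ext <;> simp [hpt, Real.exp_zero]

set_option maxHeartbeats 2000000 in
/-- Hyperbolic law of cosines for the explicit points `hpt`. -/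
private lemma cosh_dist_hpt (φ ψ s t : ℝ) :
    Real.cosh (dist (hpt φ s) (hpt ψ t)) =
      Real.cosh s * Real.cosh t - Real.sinh s * Real.sinh t * Real.cos (2 * (φ - ψ)) := by
  have hD1 := hD_pos φ s
  have hD2 := hD_pos ψ t
  have hE := Real.exp_pos s
  have hF := Real.exp_pos t
  have hdist2 : dist ((hpt φ s : ℂ)) ((hpt ψ t : ℂ)) ^ 2
      = ((hpt φ s : ℂ).re - (hpt ψ t : ℂ).re)^2 + ((hpt φ s : ℂ).im - (hpt ψ t : ℂ).im)^2 := by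
    rw [Complex.dist_eq, Complex.sq_norm, Complex.normSq_apply]
    simp [Complex.sub_re, Complex.sub_im]; ring
  rw [UpperHalfPlane.cosh_dist, hdist2, uhp_im_eq, uhp_im_eq, hpt_re, hpt_im, hpt_re, hpt_im,
      Real.cosh_eq, Real.cosh_eq, Real.sinh_eq, Real.sinh_eq,
      show 2*(φ-ψ) = 2*φ - 2*ψ by ring, Real.cos_sub, Real.cos_two_mul', Real.cos_two_mul',
      Real.sin_two_mul, Real.sin_two_mul, Real.exp_neg, Real.exp_neg]
  set s1 := Real.sin φ; set c1 := Real.cos φ; set s2 := Real.sin ψ; set c2 := Real.cos ψ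
  set E := Real.exp s; set F := Real.exp t
  have h1 : s1^2 + c1^2 = 1 := Real.sin_sq_add_cos_sq φ
  have h2 : s2^2 + c2^2 = 1 := Real.sin_sq_add_cos_sq ψ
  have hD1' := hD1.ne'
  have hD2' := hD2.ne'
  have hE' := hE.ne'
  have hF' := hF.ne'
  have hD1'' : c1 ^ 2 + s1 ^ 2 * E ^ 2 ≠ 0 := by rw [mul_comm]; exact hD1'
  have hD2'' : c2 ^ 2 + s2 ^ 2 * F ^ 2 ≠ 0 := by rw [mul_comm]; exact hD2'
  field_simp
  linear_combination ((1)*c1^2*s2^2*c2^2 + (-2)*F^2*c1^2*s2^2*c2^2 + (1)*F^4*c1^2*s2^2*c2^2 + (2)*F^2*c1^2 + (1)*E^2*F^2*c1^2*c2^4 + (-2)*E^2*F^2*c1^2*s2^2*c2^2 + (-1)*E^2*c1^2*c2^4 + (1)*E^2*c1^2*s2^2*c2^2 + (-1)*F^2*c1^2*c2^4 + (1)*c1^2*c2^4 + (1)*E^2*F^4*c1^2*s2^2*c2^2 + (-1)*E^2*F^4*c1^2*s2^4 + (1)*E^2*F^2*c1^2*s2^4 + (1)*F^4*c1^2*s2^4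 + (-1)*F^2*c1^2*s2^4 + (4)*F^2*s1^2*s2^2*c2^2 + (-1)*E^2*s1^2*c2^4 + (-10)*E^2*F^2*s1^2*s2^2*c2^2 + (-1)*E^2*F^4*s1^2*s2^4 + (1)*E^4*s1^2*c2^4 + (2)*E^4*F^2*s1^2*s2^2*c2^2 + (1)*E^4*F^4*s1^2*s2^4 + (1)*E^2*s1^2*s2^2*c2^2 + (1)*E^2*F^4*s1^2*s2^2*c2^2 + (4)*E^2*F^2*s1^2 + (-1)*E^2*F^2*c2^2 + (-1)*E^2*c2^2 + (-1)*F^2*c2^2 + (-1)*c2^2 + (-3)*E^2*F^2*s1^2*c2^4 + (2)*F^2*s1^2*c2^4 + (-1)*E^2*F^4*s2^2 + (-1)*E^2*F^2*s2^2 + (-1)*F^4*s2^2 + (-1)*F^2*s2^2 + (-3)*E^2*F^2*s1^2*s2^4 + (2)*F^2*s1^2*s2^4 + (1)*E^4*F^2*s1^2*c2^4 + (1)*E^4*s1^2*s2^2*c2^2 + (1)*E^4*F^4*s1^2*s2^2*c2^2 + (1)*E^4*F^2*s1^2*s2^4 + (1)*s2^2*c2^2 + (-2)*F^2*s2^2*c2^2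 + (1)*F^4*s2^2*c2^2 + (2)*F^2 + (-2)*F^2*s1^2 + (1)*E^2*F^2*c2^4 + (-2)*E^2*F^2*s2^2*c2^2 + (-1)*E^2*c2^4 + (1)*E^2*s2^2*c2^2 + (-1)*F^2*c2^4 + (1)*c2^4 + (1)*E^2*F^4*s2^2*c2^2 + (-1)*E^2*F^4*s2^4 + (1)*E^2*F^2*s2^4 + (1)*F^4*s2^4 + (-1)*F^2*s2^4) * h1 + ((1)*E^2*c2^2 + (-2)*E^4*F^2*s1^4*c2^2 + (4)*E^2*F^2*s1^4*c2^2 + (1)*E^4*s1^2*c2^2 + (-4)*E^2*F^2*s1^2*c2^2 + (3)*F^2*s1^2*c2^2 + (-2)*F^2*s1^4*c2^2 + (1)*E^4*F^2*s1^2*c2^2 + (1)*E^2*F^2*c2^2 + (-1)*F^2*c2^2 + (1)*c2^2 + (-1)*s1^2*c2^2 + (-2)*E^4*F^2*s1^4*s2^2 + (1)*E^2*F^2*s2^2 + (4)*E^2*F^2*s1^4*s2^2 + (3)*F^2*s1^2*s2^2 + (-2)*F^2*s1^4*s2^2 + (-4)*E^2*F^2*s1^2*s2^2 + (1)*E^4*F^2*s1^2*s2^2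 + (-2)*F^2 + (4)*F^2*s1^2 + (1)*E^4*F^4*s1^2*s2^2 + (-1)*F^2*s2^2 + (1)*F^4*s2^2 + (-1)*F^4*s1^2*s2^2 + (1)*E^2*F^4*s2^2 + (-2)*E^4*F^2*s1^4 + (4)*E^2*F^2*s1^4 + (-4)*E^2*F^2*s1^2 + (-2)*F^2*s1^4) * h2

private lemma cosh_inj_nonneg {x y : ℝ} (hx : 0 ≤ x) (hy : 0 ≤ y)
    (h : Real.cosh x = Real.cosh y) : x = y := by
  have h1 : |x| ≤ |y| := Real.cosh_le_cosh.mp h.le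
  have h2 : |y| ≤ |x| := Real.cosh_le_cosh.mp h.ge
  rw [abs_of_nonneg hx, abs_of_nonneg hy] at h1 h2
  linarith

private lemma dist_hpt_same (φ s t : ℝ) : dist (hpt φ s) (hpt φ t) = |s - t| := by
  have h : Real.cosh (dist (hpt φ s) (hpt φ t)) = Real.cosh (|s - t|) := by
    rw [cosh_dist_hpt, Real.cosh_abs, Real.cosh_sub]
    simp
  exact cosh_inj_nonneg dist_nonneg (abs_nonneg _) h

private lemma dist_hpt_from0 (φ s : ℝ) (hs : 0 ≤ s) : dist (hpt 0 0) (hpt φ s) = s := by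
  rw [show hpt 0 0 = hpt φ 0 from (hpt_zero φ).symm, dist_hpt_same, zero_sub, abs_neg,
    abs_of_nonneg hs]

private lemma btw_hpt (φ : ℝ) {s t : ℝ} (hs : 0 ≤ s) (hst : s ≤ t) :
    MetricBtw (hpt 0 0) (hpt φ s) (hpt φ t) := by
  unfold MetricBtw
  rw [dist_hpt_from0 φ s hs, dist_hpt_from0 φ t (hs.trans hst), dist_hpt_same,
    abs_of_nonpos (by linarith)]
  ring

/-- The metric projection onto a closed ball, for a point outside, lies on the geodesic
from the center and is at distance exactly `r` from it. -/
private lemma proj_btw {X : Type*} [MetricSpace X] (hgeo : IsGeodesicSpace X)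
    (x₀ x u : X) (r : ℝ) (hr : 0 < r) (hra : r ≤ dist x₀ x)
    (hu : u ∈ Metric.closedBall x₀ r)
    (hxu : ∀ w ∈ Metric.closedBall x₀ r, dist x u ≤ dist x w) :
    MetricBtw x₀ u x ∧ dist x₀ u = r := by
  have hd : 0 < dist x₀ x := lt_of_lt_of_le hr hra
  obtain ⟨w, hw1, hw2⟩ := hgeo x₀ x (r / dist x₀ x)
    ⟨div_nonneg hr.le hd.le, (div_le_one hd).mpr hra⟩
  rw [div_mul_cancel₀ _ hd.ne'] at hw1
  have hwball : w ∈ Metric.closedBall x₀ r := by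
    rw [Metric.mem_closedBall, dist_comm, hw1]
  have h1 : dist x u ≤ dist x w := hxu w hwball
  have h2 : dist u x₀ ≤ r := Metric.mem_closedBall.mp hu
  have h3 : dist x₀ x ≤ dist x₀ u + dist u x := dist_triangle _ _ _
  have h4 : dist w x = dist x₀ x - r := by
    have := hw2; unfold MetricBtw at this; linarith [this, hw1]
  have h5 : dist x w = dist x₀ x - r := by rw [dist_comm]; exact h4
  have h6 : dist x₀ u ≤ r := by rw [dist_comm]; exact h2
  have h7 : dist u x = dist x u := dist_comm u x
  have h8 : dist x u = dist x₀ x - r := le_antisymm (by linarith) (by linarith)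
  have h9 : dist x₀ u = r := le_antisymm h6 (by linarith)
  refine ⟨?_, h9⟩
  unfold MetricBtw
  rw [h9, h7, h8]
  ring


set_option maxHeartbeats 2000000 in
/-- In a complete CAT(-1) space: for `x₀ ∈ X` and `r, ε > 0` there is `R > 0`,
depending only on `r` and `ε`, such that whenever the metric projections `u, v` of
`x, y` onto the closed ball `B̄(x₀, r)` satisfy `d(u,v) ≥ ε`, the geodesic segment
`[x,y]` meets `B̄(x₀, R)`. -/
theorem segment_meets_ball {X : Type*} [MetricSpace X] [CompleteSpace X]
    (hgeo : IsGeodesicSpace X) (hcat : IsCatMinusOne X)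
    (x₀ : X) (r ε : ℝ) (hr : 0 < r) (hε : 0 < ε) :
    ∃ R : ℝ, 0 < R ∧ ∀ x y u v : X,
      u ∈ Metric.closedBall x₀ r →
      (∀ w ∈ Metric.closedBall x₀ r, dist x u ≤ dist x w) →
      v ∈ Metric.closedBall x₀ r →
      (∀ w ∈ Metric.closedBall x₀ r, dist y v ≤ dist y w) →
      ε ≤ dist u v →
      ∃ p : X, MetricBtw x p y ∧ p ∈ Metric.closedBall x₀ R := by
  classical
  have hcoshε : (1:ℝ) < Real.cosh ε := Real.one_lt_cosh.mpr hε.ne'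
  have hsinr : 0 < Real.sinh r := Real.sinh_pos_iff.mpr hr
  set K : ℝ := (Real.cosh r ^ 2 - Real.cosh ε) / Real.sinh r ^ 2 with hKdef
  set K' : ℝ := max K 0 with hK'def
  have hK0 : 0 ≤ K' := le_max_right _ _
  have hK1 : K' < 1 := by
    apply max_lt _ one_pos
    rw [div_lt_one (by positivity)]
    nlinarith only [Real.cosh_sq r, hcoshε]
  have h1K : 0 < 1 - K' := by linarith
  set S1 : ℝ := Real.sqrt (1 / (1 - K')) with hS1def
  have hS1sq : S1 ^ 2 = 1 / (1 - K') := Real.sq_sqrt (by positivity)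
  have hS1sq' : S1 ^ 2 * (1 - K') = 1 := by rw [hS1sq]; field_simp
  have hS10 : 0 ≤ S1 := Real.sqrt_nonneg _
  have hS11 : 1 ≤ S1 := by nlinarith only [hS1sq', hS10, hK0, hK1]
  set R₁ : ℝ := max (r + 1) (Real.arsinh S1) with hR₁def
  set M₀ : ℝ := Real.sqrt (1 + 3 / (1 - K')) with hM₀def
  have hM₀sq : M₀ ^ 2 = 1 + 3 / (1 - K') := Real.sq_sqrt (by positivity)
  have hM₀0 : 0 ≤ M₀ := Real.sqrt_nonneg _
  set R : ℝ := max R₁ M₀ with hRdef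
  have hrR₁ : r + 1 ≤ R₁ := le_max_left _ _
  have hR₁R : R₁ ≤ R := le_max_left _ _
  have hM₀R : M₀ ≤ R := le_max_right _ _
  have hR0 : 0 < R := by linarith
  have hsinhR₁ : S1 ≤ Real.sinh R₁ :=
    calc S1 = Real.sinh (Real.arsinh S1) := (Real.sinh_arsinh _).symm
    _ ≤ Real.sinh R₁ := Real.sinh_le_sinh.mpr (le_max_right _ _)
  refine ⟨R, hR0, ?_⟩
  intro x y u v hu hxu hv hyv hduv
  by_cases hax : dist x₀ x ≤ R
  · exact ⟨x, by simp [MetricBtw], by rwa [Metric.mem_closedBall, dist_comm]⟩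
  by_cases hay : dist x₀ y ≤ R
  · exact ⟨y, by simp [MetricBtw], by rwa [Metric.mem_closedBall, dist_comm]⟩
  push_neg at hax hay
  set a := dist x₀ x with hadef
  set b := dist x₀ y with hbdef
  set c := dist x y with hcdef
  have hra : r ≤ a := by linarith
  have hrb : r ≤ b := by linarith
  have hR₁a : R₁ ≤ a := by linarith
  have hR₁b : R₁ ≤ b := by linarith
  have ha0 : 0 < a := by linarith
  have hb0 : 0 < b := by linarith
  have hc0' : 0 ≤ c := dist_nonneg
  obtain ⟨hbu, hru⟩ := proj_btw hgeo x₀ x u r hr hra hu hxu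
  obtain ⟨hbv, hrv⟩ := proj_btw hgeo x₀ y v r hr hrb hv hyv
  have htc1 : c ≤ a + b := by
    rw [hcdef, hadef, hbdef, dist_comm x₀ x]; exact dist_triangle x x₀ y
  have htc2 : a ≤ b + c := by
    rw [hcdef, hadef, hbdef, dist_comm x y]; exact dist_triangle x₀ y x
  have htc3 : b ≤ a + c := by
    rw [hcdef, hadef, hbdef]; exact dist_triangle x₀ x y
  have hcasq : Real.cosh a ^ 2 = Real.sinh a ^ 2 + 1 := Real.cosh_sq a
  have hcbsq : Real.cosh b ^ 2 = Real.sinh b ^ 2 + 1 := Real.cosh_sq b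
  have hccsq : Real.cosh c ^ 2 = Real.sinh c ^ 2 + 1 := Real.cosh_sq c
  have hca1 : 1 ≤ Real.cosh a := Real.one_le_cosh a
  have hcb1 : 1 ≤ Real.cosh b := Real.one_le_cosh b
  have hsaS : S1 ≤ Real.sinh a := hsinhR₁.trans (Real.sinh_le_sinh.mpr hR₁a)
  have hsbS : S1 ≤ Real.sinh b := hsinhR₁.trans (Real.sinh_le_sinh.mpr hR₁b)
  have hsa0 : 0 < Real.sinh a := by linarith
  have hsb0 : 0 < Real.sinh b := by linarith
  have hsaca : Real.sinh a < Real.cosh a := Real.sinh_lt_cosh a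
  have hsbcb : Real.sinh b < Real.cosh b := Real.sinh_lt_cosh b
  have hKta : K' * Real.cosh a ≤ Real.sinh a := by
    have h₁ : 1 ≤ Real.sinh a ^ 2 * (1 - K') := by
      nlinarith only [mul_le_mul_of_nonneg_right (mul_le_mul hsaS hsaS hS10 (hS10.trans hsaS)) h1K.le, hS1sq']
    nlinarith only [mul_le_mul_of_nonneg_right h₁ (by linarith : (0:ℝ) ≤ 1 + K'), hcasq, hsa0,
      mul_le_mul_of_nonneg_left hK1.le hK0, mul_nonneg hK0 (by linarith : (0:ℝ) ≤ Real.cosh a)]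
  have hKtb : K' * Real.cosh b ≤ Real.sinh b := by
    have h₁ : 1 ≤ Real.sinh b ^ 2 * (1 - K') := by
      nlinarith only [mul_le_mul_of_nonneg_right (mul_le_mul hsbS hsbS hS10 (hS10.trans hsbS)) h1K.le, hS1sq']
    nlinarith only [mul_le_mul_of_nonneg_right h₁ (by linarith : (0:ℝ) ≤ 1 + K'), hcbsq, hsb0,
      mul_le_mul_of_nonneg_left hK1.le hK0, mul_nonneg hK0 (by linarith : (0:ℝ) ≤ Real.cosh b)]
  -- comparison triangle for (x₀; x, y): choose the comparison angle φ₁ by IVT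
  have hf1 : ContinuousOn (fun φ : ℝ => Real.cosh a * Real.cosh b - Real.sinh a * Real.sinh b * Real.cos (2*φ))
      (Set.Icc 0 (Real.pi/2)) := Continuous.continuousOn (by fun_prop)
  have hlo1 : Real.cosh a * Real.cosh b - Real.sinh a * Real.sinh b * Real.cos (2*(0:ℝ)) ≤ Real.cosh c := by
    rw [mul_zero, Real.cos_zero, mul_one]
    have h := Real.cosh_le_cosh.mpr (show |a - b| ≤ |c| by
      rw [abs_of_nonneg hc0', abs_le]; constructor <;> linarith)
    rw [Real.cosh_sub] at h
    linarith
  have hhi1 : Real.cosh c ≤ Real.cosh a * Real.cosh b - Real.sinh a * Real.sinh b * Real.cos (2*(Real.pi/2)) := by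
    rw [show (2:ℝ)*(Real.pi/2) = Real.pi by ring, Real.cos_pi]
    have h := Real.cosh_le_cosh.mpr (show |c| ≤ |a + b| by
      rw [abs_of_nonneg hc0', abs_of_nonneg (by linarith)]; exact htc1)
    rw [Real.cosh_add] at h
    linarith
  obtain ⟨φ₁, hφ₁mem, hφ₁⟩ :=
    intermediate_value_Icc (by positivity : (0:ℝ) ≤ Real.pi/2) hf1 ⟨hlo1, hhi1⟩
  have hcc : Real.cosh c = Real.cosh a * Real.cosh b - Real.sinh a * Real.sinh b * Real.cos (2*φ₁) := hφ₁.symm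
  have ht₁u : Real.cos (2*φ₁) ≤ 1 := Real.cos_le_one _
  have ht₁l : -1 ≤ Real.cos (2*φ₁) := Real.neg_one_le_cos _
  have hcos0 : ∀ ψ : ℝ, Real.cos (2 * ((0:ℝ) - ψ)) = Real.cos (2 * ψ) := by
    intro ψ; rw [show 2 * ((0:ℝ) - ψ) = -(2*ψ) by ring, Real.cos_neg]
  have d_xa : dist (hpt 0 0) (hpt 0 a) = a := dist_hpt_from0 0 a ha0.le
  have d_xb : dist (hpt 0 0) (hpt φ₁ b) = b := dist_hpt_from0 φ₁ b hb0.le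
  have d_ab : dist (hpt 0 a) (hpt φ₁ b) = c := by
    apply cosh_inj_nonneg dist_nonneg hc0'
    rw [cosh_dist_hpt, hcos0]
    exact hcc.symm
  have happ1 : dist u v ≤ dist (hpt 0 r) (hpt φ₁ r) := by
    apply hcat x₀ x y u v hbu hbv (hpt 0 0) (hpt 0 a) (hpt φ₁ b) (hpt 0 r) (hpt φ₁ r)
    · rw [d_xa, hadef]
    · rw [d_xb, hbdef]
    · rw [d_ab, hcdef]
    · exact btw_hpt 0 hr.le hra
    · rw [dist_hpt_from0 0 r hr.le, hru]
    · exact btw_hpt φ₁ hr.le hrb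
    · rw [dist_hpt_from0 φ₁ r hr.le, hrv]
  have ht₁K : Real.cos (2*φ₁) ≤ K' := by
    have h2 : Real.cosh ε ≤ Real.cosh (dist (hpt 0 r) (hpt φ₁ r)) := by
      rw [Real.cosh_le_cosh, abs_of_nonneg hε.le, abs_of_nonneg dist_nonneg]
      exact hduv.trans happ1
    rw [cosh_dist_hpt, hcos0] at h2
    have hKK : Real.cos (2*φ₁) ≤ K := by
      rw [hKdef, le_div_iff₀ (by positivity)]
      nlinarith only [h2]
    exact hKK.trans (le_max_left _ _)
  have hcab1 : 1 ≤ Real.cosh a * Real.cosh b - Real.sinh a * Real.sinh b := by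
    have h := Real.one_le_cosh (a - b)
    rw [Real.cosh_sub] at h; linarith
  have hsab : S1^2 ≤ Real.sinh a * Real.sinh b := by nlinarith only [mul_le_mul hsaS hsbS hS10 (hS10.trans hsaS)]
  have hcc2 : 2 ≤ Real.cosh c := by
    have h₂ : S1^2 * (1 - K') ≤ Real.sinh a * Real.sinh b * (1 - Real.cos (2*φ₁)) :=
      mul_le_mul hsab (by linarith) (by linarith) (by positivity)
    nlinarith only [h₂, hcab1, hcc, hS1sq']
  have hc0 : 0 < c := by
    rcases hc0'.eq_or_lt with h | h
    · exfalso
      rw [← h, Real.cosh_zero] at hcc2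
      linarith
    · exact h
  have hsc0 : 0 < Real.sinh c := Real.sinh_pos_iff.mpr hc0
  -- comparison triangle for (x; y, x₀): choose the comparison angle ψ by IVT
  have hf2 : ContinuousOn (fun φ : ℝ => Real.cosh a * Real.cosh c - Real.sinh a * Real.sinh c * Real.cos (2*φ))
      (Set.Icc 0 (Real.pi/2)) := Continuous.continuousOn (by fun_prop)
  have hlo2 : Real.cosh a * Real.cosh c - Real.sinh a * Real.sinh c * Real.cos (2*(0:ℝ)) ≤ Real.cosh b := by
    rw [mul_zero, Real.cos_zero, mul_one]
    have h := Real.cosh_le_cosh.mpr (show |a - c| ≤ |b| by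
      rw [abs_of_nonneg hb0.le, abs_le]; constructor <;> linarith)
    rw [Real.cosh_sub] at h
    linarith
  have hhi2 : Real.cosh b ≤ Real.cosh a * Real.cosh c - Real.sinh a * Real.sinh c * Real.cos (2*(Real.pi/2)) := by
    rw [show (2:ℝ)*(Real.pi/2) = Real.pi by ring, Real.cos_pi]
    have h := Real.cosh_le_cosh.mpr (show |b| ≤ |a + c| by
      rw [abs_of_nonneg hb0.le, abs_of_nonneg (by linarith)]; exact htc3)
    rw [Real.cosh_add] at h
    linarith
  obtain ⟨ψ, hψmem, hψ⟩ :=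
    intermediate_value_Icc (by positivity : (0:ℝ) ≤ Real.pi/2) hf2 ⟨hlo2, hhi2⟩
  have hcb' : Real.cosh b = Real.cosh a * Real.cosh c - Real.sinh a * Real.sinh c * Real.cos (2*ψ) := hψ.symm
  have e2 : Real.sinh c * Real.cos (2*ψ) = Real.sinh a * Real.cosh b - Real.cosh a * Real.sinh b * Real.cos (2*φ₁) := by
    have e1' : Real.sinh a * (Real.sinh c * Real.cos (2*ψ)) = Real.sinh a * (Real.sinh a * Real.cosh b - Real.cosh a * Real.sinh b * Real.cos (2*φ₁)) := by
      linear_combination hcb' + Real.cosh a * hcc + Real.cosh b * hcasq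
    exact mul_left_cancel₀ hsa0.ne' e1'
  have ht₂0 : 0 ≤ Real.cos (2*ψ) := by
    have hx : Real.cosh a * Real.sinh b * Real.cos (2*φ₁) ≤ Real.sinh a * Real.cosh b := by
      rcases le_or_gt (Real.cos (2*φ₁)) 0 with h | h
      · nlinarith only [mul_nonneg (mul_nonneg (by linarith : (0:ℝ) ≤ Real.cosh a) hsb0.le)
          (neg_nonneg.mpr h), mul_pos hsa0 (by linarith : (0:ℝ) < Real.cosh b)]
      · nlinarith only [mul_le_mul_of_nonneg_left ht₁K
            (mul_nonneg (by linarith : (0:ℝ) ≤ Real.cosh a) hsb0.le),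
          mul_le_mul_of_nonneg_left hKta hsb0.le,
          mul_le_mul_of_nonneg_left hsbcb.le hsa0.le]
    nlinarith only [e2, hx, hsc0]
  have ht₂1 : Real.cos (2*ψ) ≤ 1 := by
    have h := Real.cosh_le_cosh.mpr (show |a - c| ≤ |b| by
      rw [abs_of_nonneg hb0.le, abs_le]; constructor <;> linarith)
    rw [Real.cosh_sub] at h
    nlinarith only [h, hcb', mul_pos hsa0 hsc0]
  have hccb : Real.cosh a ≤ Real.cosh c * Real.cosh b := by
    have hx : Real.cos (2*φ₁) * Real.sinh a * Real.cosh b ≤ Real.cosh a * Real.sinh b := by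
      rcases le_or_gt (Real.cos (2*φ₁)) 0 with h | h
      · nlinarith only [mul_nonneg (mul_nonneg hsa0.le (by linarith : (0:ℝ) ≤ Real.cosh b))
          (neg_nonneg.mpr h), mul_pos (by linarith : (0:ℝ) < Real.cosh a) hsb0]
      · nlinarith only [mul_le_mul_of_nonneg_left ht₁K
            (mul_nonneg hsa0.le (by linarith : (0:ℝ) ≤ Real.cosh b)),
          mul_le_mul_of_nonneg_left hKtb hsa0.le,
          mul_le_mul_of_nonneg_right hsaca.le hsb0.le]
    have key3 : Real.cosh c * Real.cosh b - Real.cosh a = Real.sinh b * (Real.cosh a * Real.sinh b - Real.cos (2*φ₁) * Real.sinh a * Real.cosh b) := by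
      linear_combination Real.cosh b * hcc + Real.cosh a * hcbsq
    nlinarith only [key3, mul_nonneg hsb0.le (by linarith only [hx] : (0:ℝ) ≤ Real.cosh a * Real.sinh b - Real.cos (2*φ₁) * Real.sinh a * Real.cosh b)]
  have hsct : Real.sinh a * Real.cosh c * Real.cos (2*ψ) ≤ Real.cosh a * Real.sinh c := by
    have key4 : Real.cosh a * Real.sinh c^2 - Real.sinh a * Real.cosh c * (Real.sinh c * Real.cos (2*ψ)) = Real.cosh c * Real.cosh b - Real.cosh a := by
      linear_combination (-Real.cosh c) * hcb' - Real.cosh a * hccsq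
    nlinarith only [key4, hccb, hsc0, mul_pos hsc0 hsc0]
  set M : ℝ := Real.sqrt (Real.cosh a^2 - Real.sinh a^2 * Real.cos (2*ψ)^2) with hMdef
  have hm2 : 1 ≤ Real.cosh a^2 - Real.sinh a^2 * Real.cos (2*ψ)^2 := by
    nlinarith only [hcasq,
      mul_nonneg (sq_nonneg (Real.sinh a)) (by nlinarith only [ht₂0, ht₂1] : (0:ℝ) ≤ 1 - Real.cos (2*ψ)^2)]
  have hMsq : M^2 = Real.cosh a^2 - Real.sinh a^2 * Real.cos (2*ψ)^2 := Real.sq_sqrt (by linarith)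
  have hM0 : 0 < M := Real.sqrt_pos.mpr (by linarith)
  set s₀ : ℝ := Real.arsinh (Real.sinh a * Real.cos (2*ψ) / M) with hs₀def
  have hs₀0 : 0 ≤ s₀ := Real.arsinh_nonneg_iff.mpr (by positivity)
  have hsinh_s₀ : Real.sinh s₀ = Real.sinh a * Real.cos (2*ψ) / M := Real.sinh_arsinh _
  have hcosh_s₀ : Real.cosh s₀ = Real.cosh a / M := by
    rw [hs₀def, Real.cosh_arsinh,
      show 1 + (Real.sinh a * Real.cos (2*ψ) / M)^2 = (Real.cosh a / M)^2 by
        field_simp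
        linear_combination hMsq]
    exact Real.sqrt_sq (by positivity)
  have hs₀c : s₀ ≤ c := by
    have h1 : (Real.sinh a*Real.cosh c*Real.cos (2*ψ)) * (Real.sinh a*Real.cosh c*Real.cos (2*ψ)) ≤ (Real.cosh a*Real.sinh c) * (Real.cosh a*Real.sinh c) :=
      mul_le_mul hsct hsct (by positivity) (by positivity)
    have h2 : (Real.sinh a*Real.cos (2*ψ))^2 ≤ Real.sinh c^2 * (Real.cosh a^2 - Real.sinh a^2*Real.cos (2*ψ)^2) := by nlinarith only [h1, hccsq]
    have h3 : Real.sinh a * Real.cos (2*ψ) ≤ Real.sinh c * M := by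
      nlinarith only [h2, hMsq, mul_pos hsc0 hM0, sq_nonneg (Real.sinh a*Real.cos (2*ψ) - Real.sinh c*M),
        sq_nonneg (Real.sinh a*Real.cos (2*ψ) + Real.sinh c*M),
        mul_nonneg (mul_nonneg hsa0.le ht₂0) (mul_pos hsc0 hM0).le]
    have h4 : Real.sinh a * Real.cos (2*ψ) / M ≤ Real.sinh c := (div_le_iff₀ hM0).mpr (by linarith)
    have h5 : s₀ ≤ Real.arsinh (Real.sinh c) := Real.arsinh_le_arsinh.mpr h4
    exact h5.trans_eq (Real.arsinh_sinh c)
  obtain ⟨p, hp1, hp2⟩ := hgeo x y (s₀ / c)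
    ⟨div_nonneg hs₀0 hc0.le, (div_le_one hc0).mpr hs₀c⟩
  rw [← hcdef, div_mul_cancel₀ _ hc0.ne'] at hp1
  have d2_xc : dist (hpt 0 0) (hpt 0 c) = c := dist_hpt_from0 0 c hc0.le
  have d2_xa : dist (hpt 0 0) (hpt ψ a) = a := dist_hpt_from0 ψ a ha0.le
  have d2_ca : dist (hpt 0 c) (hpt ψ a) = b := by
    apply cosh_inj_nonneg dist_nonneg hb0.le
    rw [cosh_dist_hpt, hcos0]
    linear_combination -hcb'
  have happ2 : dist p x₀ ≤ dist (hpt 0 s₀) (hpt ψ a) := by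
    apply hcat x y x₀ p x₀ hp2 (by simp [MetricBtw])
      (hpt 0 0) (hpt 0 c) (hpt ψ a) (hpt 0 s₀) (hpt ψ a)
    · rw [d2_xc, hcdef]
    · rw [d2_xa, hadef]; exact dist_comm x₀ x
    · rw [d2_ca, hbdef]; exact dist_comm x₀ y
    · exact btw_hpt 0 hs₀0 hs₀c
    · rw [dist_hpt_from0 0 s₀ hs₀0, hp1]
    · simp [MetricBtw]
    · rw [d2_xa, hadef]; exact dist_comm x₀ x
  have h9 : Real.cosh (dist (hpt 0 s₀) (hpt ψ a)) = M := by
    rw [cosh_dist_hpt, hcos0, hcosh_s₀, hsinh_s₀]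
    field_simp
    linear_combination -hMsq
  have key5 : (Real.cosh a^2 - Real.sinh a^2*Real.cos (2*ψ)^2) * Real.sinh c^2 = Real.sinh c^2 + Real.sinh a^2 * Real.sinh b^2 * (1 - Real.cos (2*φ₁)^2) := by
    linear_combination (-(Real.cosh a*Real.cosh c - Real.cosh b + Real.sinh a*Real.sinh c*Real.cos (2*ψ))) * hcb' + (-(Real.cosh a^2-1)) * hccsq
      + (-(Real.cosh c - Real.cosh a*Real.cosh b - Real.sinh a*Real.sinh b*Real.cos (2*φ₁))) * hcc + (Real.cosh b^2-1) * hcasq + Real.sinh a^2 * hcbsq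
  have hXpos : 0 ≤ Real.sinh a * Real.sinh b * (1 - Real.cos (2*φ₁)) := by
    apply mul_nonneg (by positivity) (by linarith)
  have hccX : 1 + Real.sinh a * Real.sinh b * (1 - Real.cos (2*φ₁)) ≤ Real.cosh c := by nlinarith only [hcc, hcab1]
  have h13 : Real.sinh a^2*Real.sinh b^2*(1-Real.cos (2*φ₁))^2 ≤ Real.cosh c^2 := by nlinarith only [hccX, hXpos, sq_nonneg (Real.cosh c - Real.sinh a*Real.sinh b*(1-Real.cos (2*φ₁)))]
  have h14 : Real.sinh a^2*Real.sinh b^2*(1-Real.cos (2*φ₁)^2)*(1-Real.cos (2*φ₁)) ≤ 2*Real.cosh c^2 := by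
    nlinarith only [mul_le_mul_of_nonneg_right h13 (by linarith only [ht₁l] : (0:ℝ) ≤ 1 + Real.cos (2*φ₁)),
      mul_nonneg (sq_nonneg (Real.cosh c)) (by linarith only [ht₁u] : (0:ℝ) ≤ 1 - Real.cos (2*φ₁))]
  have h15 : 3*Real.cosh c^2 ≤ 4*Real.sinh c^2 := by nlinarith only [hccsq, hcc2, sq_nonneg (Real.cosh c - 2)]
  have h16 : Real.sinh a^2*Real.sinh b^2*(1-Real.cos (2*φ₁)^2)*(1-K') ≤ 3*Real.sinh c^2 := by
    nlinarith only [h14, h15, sq_nonneg (Real.sinh c),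
      mul_nonneg (mul_nonneg (mul_nonneg (sq_nonneg (Real.sinh a)) (sq_nonneg (Real.sinh b)))
        (by nlinarith only [ht₁l, ht₁u] : (0:ℝ) ≤ 1 - Real.cos (2*φ₁)^2))
        (by linarith only [ht₁K] : (0:ℝ) ≤ K' - Real.cos (2*φ₁))]
  have hMM₀ : M^2 ≤ M₀^2 := by
    rw [hMsq, hM₀sq]
    have hfrac : (1 + 3/(1-K')) * (Real.sinh c^2*(1-K')) = Real.sinh c^2*(1-K') + 3*Real.sinh c^2*(1:ℝ) := by
      field_simp
    have key5K : (Real.cosh a^2 - Real.sinh a^2*Real.cos (2*ψ)^2) * Real.sinh c^2 * (1-K')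
        = (Real.sinh c^2 + Real.sinh a^2 * Real.sinh b^2 * (1 - Real.cos (2*φ₁)^2)) * (1-K') := by rw [key5]
    have h17 : (Real.cosh a^2 - Real.sinh a^2*Real.cos (2*ψ)^2) * (Real.sinh c^2 * (1-K')) ≤ (1 + 3/(1-K')) * (Real.sinh c^2*(1-K')) := by
      rw [hfrac]; nlinarith only [key5K, h16]
    have hpos : 0 < Real.sinh c^2 * (1-K') := by positivity
    exact le_of_mul_le_mul_right h17 hpos
  have hd'0 : (0:ℝ) ≤ dist (hpt 0 s₀) (hpt ψ a) := dist_nonneg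
  have hsinh2 : Real.sinh (dist (hpt 0 s₀) (hpt ψ a)) ^ 2 = M^2 - 1 := by
    have h := Real.cosh_sq (dist (hpt 0 s₀) (hpt ψ a))
    rw [h9] at h; linarith
  have h20 : 0 ≤ Real.sinh (dist (hpt 0 s₀) (hpt ψ a)) := by
    exact Real.sinh_nonneg_iff.mpr hd'0
  have hsinhle : Real.sinh (dist (hpt 0 s₀) (hpt ψ a)) ≤ M₀ := by
    nlinarith only [hsinh2, hMM₀, hM₀0, h20,
      sq_nonneg (Real.sinh (dist (hpt 0 s₀) (hpt ψ a)) - M₀),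
      sq_nonneg (Real.sinh (dist (hpt 0 s₀) (hpt ψ a)) + M₀)]
  have hfin : dist (hpt 0 s₀) (hpt ψ a) ≤ Real.sinh (dist (hpt 0 s₀) (hpt ψ a)) := by
    rcases hd'0.eq_or_lt with h | h
    · rw [← h]; simp
    · exact (Real.self_lt_sinh_iff.mpr h).le
  refine ⟨p, hp2, ?_⟩
  rw [Metric.mem_closedBall]
  calc dist p x₀ ≤ dist (hpt 0 s₀) (hpt ψ a) := happ2
    _ ≤ Real.sinh (dist (hpt 0 s₀) (hpt ψ a)) := hfin
    _ ≤ M₀ := hsinhle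
    _ ≤ R := hM₀R
end

section
/- Let X be a complete R-tree and K ⊆ X a nonempty closed convex subset. Then every nonexpansive mapping T: K → K has a fixed point if and only if K is geodesically bounded. -/
/-- The metric segment between `x` and `y` (the set of points between them). -/
def metricSeg {X : Type*} [MetricSpace X] (x y : X) : Set X :=
  {p | dist x p + dist p y = dist x y}

/-- An `ℝ`-tree: a geodesic metric space with unique metric segments in which
`[y,x] ∩ [x,z] = {x}` implies `[y,x] ∪ [x,z] = [y,z]`. -/
def IsRTree (X : Type*) [MetricSpace X] : Prop :=
  IsGeodesicSpace X ∧
  (∀ x y : X, ∀ t : ℝ, t ∈ Set.Icc 0 (dist x y) →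
    ∃! p : X, p ∈ metricSeg x y ∧ dist x p = t) ∧
  (∀ x y z : X, metricSeg y x ∩ metricSeg x z = {x} →
    metricSeg y x ∪ metricSeg x z = metricSeg y z)

section RTreeAux

variable {X : Type*} [MetricSpace X]

private lemma btw_self_left (x y : X) : MetricBtw x x y := by
  simp [MetricBtw]

private lemma btw_self_right (x y : X) : MetricBtw x y y := by
  simp [MetricBtw]

private lemma btw_trans {x p q y : X} (hq : MetricBtw x q y) (hp : MetricBtw x p q) :
    MetricBtw x p y := by
  unfold MetricBtw at *
  have h1 := dist_triangle x p y
  have h2 := dist_triangle p q y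
  linarith

private lemma btw_of_le
    (hT2 : ∀ x y : X, ∀ t ∈ Set.Icc 0 (dist x y), ∃! p, p ∈ metricSeg x y ∧ dist x p = t)
    {x y p q : X} (hp : MetricBtw x p y) (hq : MetricBtw x q y)
    (hle : dist x p ≤ dist x q) : MetricBtw x p q := by
  have hq0 : dist x q ≤ dist x y := by
    have h := dist_nonneg (x := q) (y := y)
    unfold MetricBtw at hq; linarith
  obtain ⟨v, ⟨hv1, hv2⟩, -⟩ := hT2 x q (dist x p) ⟨dist_nonneg, hle⟩
  have hv1' : MetricBtw x v q := hv1
  have hvy : MetricBtw x v y := btw_trans hq hv1'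
  have hpv : p = v :=
    (hT2 x y (dist x p) ⟨dist_nonneg, hle.trans hq0⟩).unique ⟨hp, rfl⟩ ⟨hvy, hv2⟩
  rw [hpv]; exact hv1'

private lemma exists_branch [CompleteSpace X]
    (hT2 : ∀ x y : X, ∀ t ∈ Set.Icc 0 (dist x y), ∃! p, p ∈ metricSeg x y ∧ dist x p = t)
    (hT3 : ∀ x y z : X, metricSeg y x ∩ metricSeg x z = {x} →
      metricSeg y x ∪ metricSeg x z = metricSeg y z)
    (p a b : X) : ∃ w, MetricBtw p w a ∧ MetricBtw p w b ∧ MetricBtw a w b := by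
  classical
  set S : Set ℝ := {t | ∃ q, MetricBtw p q a ∧ MetricBtw p q b ∧ dist p q = t} with hSdef
  have hS0 : (0 : ℝ) ∈ S := ⟨p, btw_self_left p a, btw_self_left p b, dist_self p⟩
  have hSb : BddAbove S := by
    refine ⟨dist p a, ?_⟩
    rintro t ⟨q, hqa, -, rfl⟩
    have h := dist_nonneg (x := q) (y := a)
    unfold MetricBtw at hqa; linarith
  obtain ⟨u, -, hu_tend, hu_mem⟩ := exists_seq_tendsto_sSup ⟨0, hS0⟩ hSb
  choose q hqa hqb hqd using hu_mem
  have key : ∀ m n : ℕ, dist (q m) (q n) = dist (u m) (u n) := by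
    intro m n
    rcases le_total (dist p (q m)) (dist p (q n)) with h | h
    · have hb : MetricBtw p (q m) (q n) := btw_of_le hT2 (hqa m) (hqa n) h
      unfold MetricBtw at hb
      rw [Real.dist_eq, abs_of_nonpos (by rw [← hqd m, ← hqd n]; linarith),
        ← hqd m, ← hqd n]
      linarith
    · have hb : MetricBtw p (q n) (q m) := btw_of_le hT2 (hqa n) (hqa m) h
      unfold MetricBtw at hb
      have hc := dist_comm (q m) (q n)
      rw [Real.dist_eq, abs_of_nonneg (by rw [← hqd m, ← hqd n]; linarith),
        ← hqd m, ← hqd n]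
      linarith
  have hcauchy : CauchySeq q := by
    have ht : CauchySeq u := hu_tend.cauchySeq
    rw [Metric.cauchySeq_iff] at ht ⊢
    intro ε hε
    obtain ⟨N, hN⟩ := ht ε hε
    exact ⟨N, fun m hm n hn => by rw [key m n]; exact hN m hm n hn⟩
  obtain ⟨w, hw⟩ := cauchySeq_tendsto_of_complete hcauchy
  have hpw : dist p w = sSup S := by
    have h1 : Filter.Tendsto (fun n => dist p (q n)) Filter.atTop (nhds (dist p w)) :=
      Filter.Tendsto.dist tendsto_const_nhds hw
    have h2 : (fun n => dist p (q n)) = u := funext hqd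
    rw [h2] at h1
    exact tendsto_nhds_unique h1 hu_tend
  have hwa : MetricBtw p w a := by
    have h1 : Filter.Tendsto (fun n => dist p (q n) + dist (q n) a) Filter.atTop
        (nhds (dist p w + dist w a)) :=
      (Filter.Tendsto.dist tendsto_const_nhds hw).add (Filter.Tendsto.dist hw tendsto_const_nhds)
    have h2 : (fun n => dist p (q n) + dist (q n) a) = fun _ => dist p a := by
      funext n; exact hqa n
    rw [h2] at h1
    exact tendsto_nhds_unique h1 tendsto_const_nhds
  have hwb : MetricBtw p w b := by
    have h1 : Filter.Tendsto (fun n => dist p (q n) + dist (q n) b) Filter.atTop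
        (nhds (dist p w + dist w b)) :=
      (Filter.Tendsto.dist tendsto_const_nhds hw).add (Filter.Tendsto.dist hw tendsto_const_nhds)
    have h2 : (fun n => dist p (q n) + dist (q n) b) = fun _ => dist p b := by
      funext n; exact hqb n
    rw [h2] at h1
    exact tendsto_nhds_unique h1 tendsto_const_nhds
  have hmax : ∀ v, v ∈ metricSeg a w → v ∈ metricSeg w b → v = w := by
    intro v hva hvb
    have hva' : dist a v + dist v w = dist a w := hva
    have hvb' : dist w v + dist v b = dist w b := hvb
    have c1 := dist_comm a v
    have c2 := dist_comm v w
    have c3 := dist_comm a w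
    have c4 := dist_comm w b
    have t1 := dist_triangle p w v
    have t2 := dist_triangle p v a
    have t3 := dist_triangle p v b
    unfold MetricBtw at hwa hwb
    have hpv : dist p v = dist p w + dist w v := by linarith
    have hva2 : MetricBtw p v a := by unfold MetricBtw; linarith
    have hvb2 : MetricBtw p v b := by unfold MetricBtw; linarith
    have hmem : dist p v ∈ S := ⟨v, hva2, hvb2, rfl⟩
    have hle := le_csSup hSb hmem
    have h0 : dist w v ≤ 0 := by linarith
    have := dist_le_zero.mp h0
    rw [← this]
  have hseteq : metricSeg a w ∩ metricSeg w b = {w} := by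
    apply Set.eq_singleton_iff_unique_mem.mpr
    refine ⟨⟨?_, ?_⟩, ?_⟩
    · show dist a w + dist w w = dist a w
      simp
    · show dist w w + dist w b = dist w b
      simp
    · rintro v ⟨h1, h2⟩; exact hmax v h1 h2
  have hun := hT3 w a b hseteq
  have hwin : w ∈ metricSeg a b := by
    rw [← hun]; left
    show dist a w + dist w w = dist a w
    simp
  exact ⟨w, hwa, hwb, hwin⟩

private noncomputable def gp (p a b : X) : ℝ := (dist p a + dist p b - dist a b) / 2

private lemma gp_nonneg (p a b : X) : 0 ≤ gp p a b := by
  have h := dist_triangle a p b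
  have c1 := dist_comm a p
  unfold gp; linarith

private lemma gp_comm (p a b : X) : gp p a b = gp p b a := by
  unfold gp; rw [dist_comm a b]; ring

private lemma gp_min_aux [CompleteSpace X]
    (hT2 : ∀ x y : X, ∀ t ∈ Set.Icc 0 (dist x y), ∃! p, p ∈ metricSeg x y ∧ dist x p = t)
    (hT3 : ∀ x y z : X, metricSeg y x ∩ metricSeg x z = {x} →
      metricSeg y x ∪ metricSeg x z = metricSeg y z)
    (p a b c : X) (hle : gp p a c ≤ gp p b c) : gp p a c ≤ gp p a b := by
  obtain ⟨w1, h1a, h1c, h1ac⟩ := exists_branch hT2 hT3 p a c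
  obtain ⟨w2, h2b, h2c, h2bc⟩ := exists_branch hT2 hT3 p b c
  have h1ac' : dist a w1 + dist w1 c = dist a c := h1ac
  have h2bc' : dist b w2 + dist w2 c = dist b c := h2bc
  have e1 : dist p w1 = gp p a c := by
    unfold MetricBtw at h1a h1c
    unfold gp
    have c1 := dist_comm w1 a
    linarith
  have e2 : dist p w2 = gp p b c := by
    unfold MetricBtw at h2b h2c
    unfold gp
    have c1 := dist_comm w2 b
    linarith
  have h12 : MetricBtw p w1 w2 := btw_of_le hT2 h1c h2c (by rw [e1, e2]; exact hle)
  have h1b : MetricBtw p w1 b := btw_trans h2b h12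
  rw [← e1]
  unfold MetricBtw at h1a h1b
  have t := dist_triangle a w1 b
  have c1 := dist_comm w1 a
  unfold gp
  linarith

private lemma gp_min [CompleteSpace X]
    (hT2 : ∀ x y : X, ∀ t ∈ Set.Icc 0 (dist x y), ∃! p, p ∈ metricSeg x y ∧ dist x p = t)
    (hT3 : ∀ x y z : X, metricSeg y x ∩ metricSeg x z = {x} →
      metricSeg y x ∪ metricSeg x z = metricSeg y z)
    (p a b c : X) : min (gp p a c) (gp p b c) ≤ gp p a b := by
  rcases le_total (gp p a c) (gp p b c) with h | h
  · exact le_trans (min_le_left _ _) (gp_min_aux hT2 hT3 p a b c h)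
  · have h2 := gp_min_aux hT2 hT3 p b a c h
    rw [gp_comm p b a] at h2
    exact le_trans (min_le_right _ _) h2

end RTreeAux

/-- A nonempty closed convex subset `K` of a complete `ℝ`-tree has the fixed point
property for nonexpansive mappings `T : K → K` if and only if `K` is geodesically
bounded. -/
theorem rtree_fpp_iff_geodesically_bounded {X : Type*} [MetricSpace X]
    [CompleteSpace X] (htree : IsRTree X)
    (K : Set X) (hne : K.Nonempty) (hcl : IsClosed K) (hconv : MetricConvex K) :
    (∀ T : X → X, Set.MapsTo T K K →
      (∀ x ∈ K, ∀ y ∈ K, dist (T x) (T y) ≤ dist x y) → ∃ z ∈ K, T z = z) ↔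
    GeodesicallyBounded K := by
  classical
  constructor
  · -- FPP → geodesically bounded
    intro hFPP
    by_contra hray
    obtain ⟨c, hc, hcK⟩ := not_not.mp hray
    have hdcc : ∀ s : ℝ, 0 ≤ s → dist (c 0) (c s) = s := by
      intro s hs
      rw [hc 0 s le_rfl hs, zero_sub, abs_neg, abs_of_nonneg hs]
    set g : X → ℕ → ℝ := fun x n => (dist (c 0) x + (n : ℝ) - dist x (c n)) / 2 with hgdef
    have hbdd : ∀ x : X, BddAbove (Set.range (g x)) := by
      intro x
      refine ⟨dist (c 0) x, ?_⟩
      rintro r ⟨n, rfl⟩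
      have t := dist_triangle (c 0) x (c (n : ℝ))
      have hn := hdcc (n : ℝ) (Nat.cast_nonneg n)
      simp only [hgdef]
      linarith
    set A : X → ℝ := fun x => ⨆ n : ℕ, g x n with hAdef
    have hA0 : ∀ x, 0 ≤ A x := by
      intro x
      have h : g x 0 ≤ A x := by
        simp only [hAdef]; exact le_ciSup (hbdd x) 0
      have hg0 : g x 0 = 0 := by
        simp only [hgdef]
        rw [Nat.cast_zero, dist_comm x (c 0)]
        ring
      linarith
    have hAle : ∀ x y : X, A x ≤ A y + dist x y := by
      intro x y
      have h : ∀ n : ℕ, g x n ≤ A y + dist x y := by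
        intro n
        have h1 : g y n ≤ A y := by
          simp only [hAdef]; exact le_ciSup (hbdd y) n
        have t1 := dist_triangle (c 0) y x
        have t2 := dist_triangle y x (c (n : ℝ))
        have c1 := dist_comm y x
        simp only [hgdef] at h1 ⊢
        linarith
      simp only [hAdef]
      exact ciSup_le h
    have hAc : ∀ s : ℝ, 0 ≤ s → A (c s) = s := by
      intro s hs
      have hgn : ∀ n : ℕ, g (c s) n = min s (n : ℝ) := by
        intro n
        have h1 : dist (c s) (c (n : ℝ)) = |s - (n : ℝ)| := hc s n hs (Nat.cast_nonneg n)
        simp only [hgdef]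
        rw [h1, hdcc s hs]
        rcases le_total s (n : ℝ) with h | h
        · rw [abs_of_nonpos (by linarith), min_eq_left h]; ring
        · rw [abs_of_nonneg (by linarith), min_eq_right h]; ring
      apply le_antisymm
      · simp only [hAdef]
        apply ciSup_le
        intro n
        rw [hgn n]
        exact min_le_left _ _
      · obtain ⟨n, hn⟩ := exists_nat_ge s
        have h := le_ciSup (hbdd (c s)) n
        rw [hgn n, min_eq_left hn] at h
        simp only [hAdef]
        exact h
    obtain ⟨z, hzK, hzfix⟩ := hFPP (fun x => c (A x + 1))
      (fun x _ => hcK _ (by have := hA0 x; linarith))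
      (by
        intro x _ y _
        have e : dist (c (A x + 1)) (c (A y + 1)) = |A x + 1 - (A y + 1)| :=
          hc _ _ (by have := hA0 x; linarith) (by have := hA0 y; linarith)
        show dist (c (A x + 1)) (c (A y + 1)) ≤ dist x y
        rw [e]
        have h1 := hAle x y
        have h2 := hAle y x
        have h3 : A x + 1 - (A y + 1) = A x - A y := by ring
        rw [h3, abs_sub_le_iff]
        have c1 := dist_comm y x
        constructor <;> linarith)
    have hzfix' : c (A z + 1) = z := hzfix
    have hcontr : A z = A z + 1 := by
      conv_lhs => rw [← hzfix']
      exact hAc (A z + 1) (by have := hA0 z; linarith)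
    linarith
  · -- geodesically bounded → FPP
    intro hGB T hmaps hnon
    by_contra hfix
    push_neg at hfix
    obtain ⟨x0, hx0K⟩ := hne
    have hT2 := htree.2.1
    have hT3 := htree.2.2
    -- Zorn on P = {y ∈ K : y ∈ [x0, Ty]}
    have hchain : ∀ c' : Set {y : X // y ∈ K ∧ MetricBtw x0 y (T y)},
        IsChain (fun u v => MetricBtw x0 u.1 v.1) c' →
        ∃ ub : {y : X // y ∈ K ∧ MetricBtw x0 y (T y)}, ∀ a ∈ c', MetricBtw x0 a.1 ub.1 := by
      intro c' hch
      rcases Set.eq_empty_or_nonempty c' with rfl | hcne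
      · exact ⟨⟨x0, hx0K, btw_self_left x0 (T x0)⟩, by simp⟩
      have hcomp : ∀ v w : {y : X // y ∈ K ∧ MetricBtw x0 y (T y)}, v ∈ c' → w ∈ c' →
          MetricBtw x0 v.1 w.1 ∨ MetricBtw x0 w.1 v.1 := by
        intro v w hv hw
        rcases eq_or_ne v w with rfl | hne'
        · exact Or.inl (btw_self_right x0 v.1)
        · exact hch hv hw hne'
      have hkey2 : ∀ v w : {y : X // y ∈ K ∧ MetricBtw x0 y (T y)}, v ∈ c' → w ∈ c' →
          dist v.1 w.1 = |dist x0 v.1 - dist x0 w.1| := by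
        intro v w hv hw
        rcases hcomp v w hv hw with h | h
        · unfold MetricBtw at h
          rw [abs_of_nonpos (by have := dist_nonneg (x := v.1) (y := w.1); linarith)]
          linarith
        · unfold MetricBtw at h
          have hcvw := dist_comm v.1 w.1
          rw [abs_of_nonneg (by have := dist_nonneg (x := w.1) (y := v.1); linarith)]
          linarith
      by_cases hbddD : BddAbove ((fun a : {y : X // y ∈ K ∧ MetricBtw x0 y (T y)} =>
          dist x0 a.1) '' c')
      · -- bounded chain : take the limit
        have hDne : ((fun a : {y : X // y ∈ K ∧ MetricBtw x0 y (T y)} =>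
            dist x0 a.1) '' c').Nonempty := hcne.image _
        obtain ⟨u, -, hu_tend, hu_mem⟩ := exists_seq_tendsto_sSup hDne hbddD
        choose aseq haseq hadist0 using hu_mem
        have hadist : ∀ n : ℕ, dist x0 (aseq n).1 = u n := hadist0
        have hcau : CauchySeq (fun n => (aseq n).1) := by
          have ht : CauchySeq u := hu_tend.cauchySeq
          rw [Metric.cauchySeq_iff] at ht ⊢
          intro ε hε
          obtain ⟨N, hN⟩ := ht ε hε
          refine ⟨N, fun m hm n hn => ?_⟩
          rw [hkey2 _ _ (haseq m) (haseq n), hadist m, hadist n, ← Real.dist_eq]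
          exact hN m hm n hn
        obtain ⟨L, hL⟩ := cauchySeq_tendsto_of_complete hcau
        have hLK : L ∈ K :=
          hcl.mem_of_tendsto hL (Filter.Eventually.of_forall fun n => (aseq n).2.1)
        have hdx0 : Filter.Tendsto (fun n => dist x0 (aseq n).1) Filter.atTop
            (nhds (dist x0 L)) := Filter.Tendsto.dist tendsto_const_nhds hL
        have hx0L : dist x0 L = sSup ((fun a : {y : X // y ∈ K ∧ MetricBtw x0 y (T y)} =>
            dist x0 a.1) '' c') := by
          have h1 := hdx0
          have h2 : (fun n => dist x0 (aseq n).1) = u := funext hadist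
          rw [h2] at h1
          exact tendsto_nhds_unique h1 hu_tend
        have hdan : Filter.Tendsto (fun n => dist (aseq n).1 L) Filter.atTop (nhds 0) := by
          simpa using Filter.Tendsto.dist hL (tendsto_const_nhds (x := L))
        have hLP : MetricBtw x0 L (T L) := by
          have est : ∀ n, dist x0 (aseq n).1 + dist L (T L) - 3 * dist (aseq n).1 L ≤
              dist x0 (T L) := by
            intro n
            obtain ⟨hanK, hanB⟩ := (aseq n).2
            have h1 : dist (T (aseq n).1) (T L) ≤ dist (aseq n).1 L := hnon _ hanK _ hLK
            unfold MetricBtw at hanB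
            have t1 := dist_triangle x0 (T L) (T (aseq n).1)
            have t2 := dist_triangle (aseq n).1 (T (aseq n).1) (T L)
            have t3 := dist_triangle L (aseq n).1 (T L)
            have c1 := dist_comm (T L) (T (aseq n).1)
            have c2 := dist_comm L (aseq n).1
            linarith
          have hlim : Filter.Tendsto
              (fun n => dist x0 (aseq n).1 + dist L (T L) - 3 * dist (aseq n).1 L)
              Filter.atTop (nhds (dist x0 L + dist L (T L) - 3 * 0)) :=
            (hdx0.add tendsto_const_nhds).sub (hdan.const_mul 3)
          have hle := le_of_tendsto hlim (Filter.Eventually.of_forall est)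
          have tt := dist_triangle x0 L (T L)
          unfold MetricBtw
          linarith
        refine ⟨⟨L, hLK, hLP⟩, ?_⟩
        intro a ha
        have hales : dist x0 a.1 ≤ sSup ((fun a : {y : X // y ∈ K ∧ MetricBtw x0 y (T y)} =>
            dist x0 a.1) '' c') := le_csSup hbddD ⟨a, ha, rfl⟩
        have h1 : Filter.Tendsto (fun n => dist a.1 (aseq n).1) Filter.atTop
            (nhds (dist a.1 L)) := Filter.Tendsto.dist tendsto_const_nhds hL
        have h2 : Filter.Tendsto (fun n => |u n - dist x0 a.1|) Filter.atTop
            (nhds (|sSup ((fun a : {y : X // y ∈ K ∧ MetricBtw x0 y (T y)} =>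
            dist x0 a.1) '' c') - dist x0 a.1|)) := (hu_tend.sub tendsto_const_nhds).abs
        have h3 : (fun n => dist a.1 (aseq n).1) = fun n => |u n - dist x0 a.1| := by
          funext n
          rw [hkey2 _ _ ha (haseq n), hadist n, abs_sub_comm]
        rw [h3] at h1
        have h4 := tendsto_nhds_unique h1 h2
        show dist x0 a.1 + dist a.1 L = dist x0 L
        rw [h4, abs_of_nonneg (by linarith), hx0L]
        ring
      · -- unbounded chain : build a geodesic ray, contradiction
        exfalso
        apply hGB
        rw [not_bddAbove_iff] at hbddD
        have hsel : ∀ t : ℝ, ∃ a, a ∈ c' ∧ max t 0 ≤ dist x0 a.1 := by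
          intro t
          obtain ⟨y, hy, hty⟩ := hbddD (max t 0)
          obtain ⟨a, ha, rfl⟩ := hy
          exact ⟨a, ha, hty.le⟩
        choose Ya hYc hYd using hsel
        have hpt : ∀ t : ℝ, ∃! q, q ∈ metricSeg x0 (Ya t).1 ∧ dist x0 q = max t 0 :=
          fun t => hT2 x0 (Ya t).1 (max t 0) ⟨le_max_right t 0, hYd t⟩
        set ray : ℝ → X := fun t => (hpt t).exists.choose with hraydef
        have hrayseg : ∀ t, MetricBtw x0 (ray t) (Ya t).1 := fun t => (hpt t).exists.choose_spec.1
        have hrayd : ∀ t, dist x0 (ray t) = max t 0 := fun t => (hpt t).exists.choose_spec.2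
        have wd : ∀ z : {y : X // y ∈ K ∧ MetricBtw x0 y (T y)}, z ∈ c' → ∀ t : ℝ, 0 ≤ t →
            t ≤ dist x0 z.1 → MetricBtw x0 (ray t) z.1 := by
          intro z hz t ht htle
          have hmx : max t 0 = t := max_eq_left ht
          rcases hcomp (Ya t) z (hYc t) hz with h | h
          · exact btw_trans h (hrayseg t)
          · exact btw_of_le hT2 (hrayseg t) h (by rw [hrayd t, hmx]; exact htle)
        have main : ∀ s t : ℝ, 0 ≤ s → 0 ≤ t → s ≤ t → dist (ray s) (ray t) = t - s := by
          intro s t hs ht hst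
          have hd1 : t ≤ dist x0 (Ya t).1 := by
            have := hYd t
            rwa [max_eq_left ht] at this
          have h1 : MetricBtw x0 (ray s) (Ya t).1 := wd (Ya t) (hYc t) s hs (hst.trans hd1)
          have h2 : MetricBtw x0 (ray t) (Ya t).1 := hrayseg t
          have hb : MetricBtw x0 (ray s) (ray t) :=
            btw_of_le hT2 h1 h2
              (by rw [hrayd s, hrayd t, max_eq_left hs, max_eq_left ht]; exact hst)
          unfold MetricBtw at hb
          have e1 := hrayd s
          have e2 := hrayd t
          rw [max_eq_left hs] at e1
          rw [max_eq_left ht] at e2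
          linarith
        refine ⟨ray, ?_, ?_⟩
        · intro s t hs ht
          rcases le_total s t with h | h
          · rw [main s t hs ht h, abs_of_nonpos (by linarith : s - t ≤ 0)]; ring
          · rw [dist_comm, main t s ht hs h, abs_of_nonneg (by linarith : 0 ≤ s - t)]
        · intro t _
          exact hconv x0 hx0K (Ya t).1 (Ya t).2.1 (ray t) (hrayseg t)
    obtain ⟨m, hmax⟩ := exists_maximal_of_chains_bounded hchain
      (fun hab hbc => btw_trans hbc hab)
    have hyK : m.1 ∈ K := m.2.1
    have hyB : MetricBtw x0 m.1 (T m.1) := m.2.2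
    have hTyK : T m.1 ∈ K := hmaps hyK
    have hdpos : 0 < dist m.1 (T m.1) := dist_pos.mpr (Ne.symm (hfix m.1 hyK))
    obtain ⟨z, hzd, hzB⟩ := htree.1 m.1 (T m.1) (1/4) ⟨by norm_num, by norm_num⟩
    have hzK : z ∈ K := hconv m.1 hyK (T m.1) hTyK z hzB
    have hzy : 0 < dist m.1 z := by rw [hzd]; linarith
    -- Lemma A : z ∈ [y, Tz]
    have hA : MetricBtw m.1 z (T z) := by
      have h0 : gp z m.1 (T m.1) = 0 := by
        unfold MetricBtw at hzB
        unfold gp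
        have c1 := dist_comm m.1 z
        linarith
      have hβ : 0 < gp z (T z) (T m.1) := by
        unfold gp
        have h1 : dist (T z) (T m.1) ≤ dist z m.1 := hnon z hzK m.1 hyK
        unfold MetricBtw at hzB
        have c1 := dist_comm z m.1
        have h2 := dist_nonneg (x := z) (y := T z)
        linarith
      have hm2 := gp_min hT2 hT3 z m.1 (T m.1) (T z)
      have hα : gp z m.1 (T z) ≤ 0 := by
        rw [gp_comm z (T m.1) (T z)] at hm2
        rcases min_le_iff.mp (hm2.trans_eq h0) with h | h
        · exact h
        · linarith
      have hα0 : gp z m.1 (T z) = 0 := le_antisymm hα (gp_nonneg _ _ _)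
      unfold gp at hα0
      unfold MetricBtw
      have c1 := dist_comm z m.1
      linarith
    -- y ∈ [x0, z]
    have hyz : MetricBtw x0 m.1 z := by
      unfold MetricBtw at hyB hzB ⊢
      have t1 := dist_triangle x0 m.1 z
      have t2 := dist_triangle x0 z (T m.1)
      linarith
    -- z ∈ [x0, Tz]
    have hzB2 : MetricBtw x0 z (T z) := by
      have hgyx0 : gp z m.1 x0 = dist m.1 z := by
        unfold gp
        unfold MetricBtw at hyz
        have c1 := dist_comm z m.1
        have c2 := dist_comm z x0
        have c3 := dist_comm m.1 x0
        linarith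
      have hm2 := gp_min hT2 hT3 z m.1 (T z) x0
      have h0' : gp z m.1 (T z) = 0 := by
        unfold gp
        unfold MetricBtw at hA
        have c1 := dist_comm z m.1
        linarith
      have hle0 : gp z (T z) x0 ≤ 0 := by
        rcases min_le_iff.mp (hm2.trans_eq h0') with h | h
        · rw [hgyx0] at h; linarith
        · exact h
      have h00 : gp z (T z) x0 = 0 := le_antisymm hle0 (gp_nonneg _ _ _)
      unfold gp at h00
      unfold MetricBtw
      have c1 := dist_comm z x0
      have c2 := dist_comm (T z) x0
      linarith
    have hmz := hmax ⟨z, hzK, hzB2⟩ hyz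
    unfold MetricBtw at hmz hyz
    have c1 := dist_comm z m.1
    linarith
end

section
/- Let X be a complete CAT(0) space with geodesically bounded closed convex subsets having the following property: for a sequence (wₙ) in X, points yₙᵐ on the segments [θ, wₙ] at distance m from a fixed θ with d(θ,wₙ) → ∞. If for every m the sequence (yₙᵐ)ₙ converges to some yᵐ, then the points (yᵐ)_{m∈ℕ}, together with the interpolating segments, form a geodesic ray emanating from θ; in particular yᵐ ∈ [θ, y^M] whenever m < M and d(θ, yᵐ) = m. -/
noncomputable def LFGR.linePt (r : ℝ) : EuclideanSpace ℝ (Fin 2) :=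
  (WithLp.equiv 2 (Fin 2 → ℝ)).symm ![r, 0]

namespace LFGR

lemma linePt_dist (r s : ℝ) : dist (linePt r) (linePt s) = |r - s| := by
  have : dist (linePt r) (linePt s) = Real.sqrt (|r - s| ^ 2 + |(0:ℝ) - 0| ^ 2) := by
    simp [linePt, EuclideanSpace.dist_eq, Fin.sum_univ_two, Real.dist_eq]
  rw [this]
  simp [sq_abs, Real.sqrt_sq_eq_abs]

lemma linePt_btw {a b c : ℝ} (h1 : a ≤ b) (h2 : b ≤ c) :
    MetricBtw (linePt a) (linePt b) (linePt c) := by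
  unfold MetricBtw
  rw [linePt_dist, linePt_dist, linePt_dist, abs_of_nonpos (by linarith),
    abs_of_nonpos (by linarith), abs_of_nonpos (by linarith)]
  ring

/-- uniqueness-of-geodesics type lemma in CAT(0): two points between `x` and `z`
are at distance the difference of their distances to `x`. -/
lemma seg_dist {X : Type*} [MetricSpace X] (hcat : IsCatZero X) {x z p q : X}
    (hp : MetricBtw x p z) (hq : MetricBtw x q z) :
    dist p q = |dist x p - dist x q| := by
  have hpz := dist_nonneg (x := p) (y := z)
  have hqz := dist_nonneg (x := q) (y := z)
  have hxp := dist_nonneg (x := x) (y := p)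
  have hxq := dist_nonneg (x := x) (y := q)
  have hp' := hp; have hq' := hq
  unfold MetricBtw at hp' hq'
  refine le_antisymm ?_ ?_
  · have hub := hcat x z z p q hp hq (linePt 0) (linePt (dist x z)) (linePt (dist x z))
      (linePt (dist x p)) (linePt (dist x q))
      (by rw [linePt_dist]; rw [abs_sub_comm]; simp [abs_of_nonneg dist_nonneg])
      (by rw [linePt_dist]; rw [abs_sub_comm]; simp [abs_of_nonneg dist_nonneg])
      (by simp [linePt_dist])
      (linePt_btw hxp (by linarith))
      (by rw [linePt_dist, abs_sub_comm]; simp [abs_of_nonneg hxp])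
      (linePt_btw hxq (by linarith))
      (by rw [linePt_dist, abs_sub_comm]; simp [abs_of_nonneg hxq])
    rwa [linePt_dist] at hub
  · have := abs_dist_sub_le p q x
    rwa [dist_comm p x, dist_comm q x] at this

lemma btw_trans {X : Type*} [MetricSpace X] {x a p b : X}
    (h1 : MetricBtw x a b) (h2 : MetricBtw a p b) :
    MetricBtw x p b ∧ dist x p = dist x a + dist a p := by
  unfold MetricBtw at *
  have hle : dist x p ≤ dist x a + dist a p := dist_triangle x a p
  have hge : dist x b ≤ dist x p + dist p b := dist_triangle x p b
  have key : dist x p = dist x a + dist a p := by linarith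
  exact ⟨by linarith, key⟩

lemma btw_trans2 {X : Type*} [MetricSpace X] {x p a b : X}
    (h1 : MetricBtw x p a) (h2 : MetricBtw x a b) : MetricBtw x p b := by
  unfold MetricBtw at *
  have t1 : dist p b ≤ dist p a + dist a b := dist_triangle p a b
  have t2 : dist x b ≤ dist x p + dist p b := dist_triangle x p b
  linarith

end LFGR

/-- In a complete CAT(0) space: let `θ ∈ X`, `d(θ, wₙ) → ∞`, and for each `m` let
`Y n m` be the point of `[θ, wₙ]` at distance `m` from `θ` (whenever `m ≤ d(θ,wₙ)`).
If each sequence `(Y n m)ₙ` converges to `y m`, then `d(θ, y m) = m`, the limits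
are nested (`y m ∈ [θ, y M]` for `m < M`), and together with the interpolating
segments they form a geodesic ray emanating from `θ`. -/
theorem limits_form_geodesic_ray {X : Type*} [MetricSpace X] [CompleteSpace X]
    (hgeo : IsGeodesicSpace X) (hcat : IsCatZero X)
    (θ : X) (w : ℕ → X)
    (hw : Filter.Tendsto (fun n => dist θ (w n)) Filter.atTop Filter.atTop)
    (Y : ℕ → ℕ → X)
    (hY : ∀ m n : ℕ, (m : ℝ) ≤ dist θ (w n) →
      MetricBtw θ (Y n m) (w n) ∧ dist θ (Y n m) = m)
    (y : ℕ → X)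
    (hconv : ∀ m : ℕ, Filter.Tendsto (fun n => Y n m) Filter.atTop (nhds (y m))) :
    (∀ m : ℕ, dist θ (y m) = m) ∧
    (∀ m M : ℕ, m < M → MetricBtw θ (y m) (y M)) ∧
    ∃ c : ℝ → X, (∀ s t : ℝ, 0 ≤ s → 0 ≤ t → dist (c s) (c t) = |s - t|) ∧
      c 0 = θ ∧ ∀ m : ℕ, c (m : ℝ) = y m := by
  classical
  have h1 : ∀ m : ℕ, dist θ (y m) = m := by
    intro m
    have hev : (fun n => dist θ (Y n m)) =ᶠ[Filter.atTop] fun _ => (m : ℝ) := by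
      filter_upwards [hw.eventually_ge_atTop (m : ℝ)] with n hn
      exact (hY m n hn).2
    have hlim : Filter.Tendsto (fun n => dist θ (Y n m)) Filter.atTop
        (nhds (dist θ (y m))) := tendsto_const_nhds.dist (hconv m)
    exact tendsto_nhds_unique hlim (Filter.Tendsto.congr' hev.symm tendsto_const_nhds)
  have h2 : ∀ m M : ℕ, m ≤ M → dist (y m) (y M) = (M : ℝ) - m := by
    intro m M hmM
    have hev : (fun n => dist (Y n m) (Y n M)) =ᶠ[Filter.atTop]
        fun _ => (M : ℝ) - m := by
      filter_upwards [hw.eventually_ge_atTop (M : ℝ)] with n hn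
      have hm := hY m n (le_trans (by exact_mod_cast hmM) hn)
      have hM := hY M n hn
      rw [LFGR.seg_dist hcat hm.1 hM.1, hm.2, hM.2, abs_sub_comm,
        abs_of_nonneg (sub_nonneg.2 (by exact_mod_cast hmM))]
    have hlim : Filter.Tendsto (fun n => dist (Y n m) (Y n M)) Filter.atTop
        (nhds (dist (y m) (y M))) := (hconv m).dist (hconv M)
    exact tendsto_nhds_unique hlim (Filter.Tendsto.congr' hev.symm tendsto_const_nhds)
  have hbtw : ∀ m M : ℕ, m ≤ M → MetricBtw θ (y m) (y M) := by
    intro m M hmM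
    unfold MetricBtw
    rw [h1 m, h1 M, h2 m M hmM]
    ring
  refine ⟨h1, fun m M h => hbtw m M h.le, ?_⟩
  have hmem : ∀ t : ℝ, 0 ≤ t → (t - (⌊t⌋₊ : ℝ)) ∈ Set.Icc (0 : ℝ) 1 := by
    intro t ht
    constructor
    · simpa using Nat.floor_le ht
    · have := Nat.lt_floor_add_one t
      push_cast at this ⊢
      linarith
  set c : ℝ → X := fun t =>
    if h : 0 ≤ t then
      Classical.choose (hgeo (y ⌊t⌋₊) (y (⌊t⌋₊ + 1)) (t - ⌊t⌋₊) (hmem t h))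
    else θ with hcdef
  have hdist1 : ∀ m : ℕ, dist (y m) (y (m + 1)) = 1 := by
    intro m
    rw [h2 m (m + 1) (Nat.le_succ m)]
    push_cast; ring
  have hc : ∀ t : ℝ, 0 ≤ t →
      dist (y ⌊t⌋₊) (c t) = t - ⌊t⌋₊ ∧ MetricBtw (y ⌊t⌋₊) (c t) (y (⌊t⌋₊ + 1)) := by
    intro t ht
    have hspec := Classical.choose_spec (hgeo (y ⌊t⌋₊) (y (⌊t⌋₊ + 1)) (t - ⌊t⌋₊) (hmem t ht))
    rw [hcdef]
    simp only [dif_pos ht]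
    refine ⟨?_, hspec.2⟩
    rw [hspec.1, hdist1, mul_one]
  have hcθ : ∀ t : ℝ, 0 ≤ t →
      dist θ (c t) = t ∧ MetricBtw θ (c t) (y (⌊t⌋₊ + 1)) := by
    intro t ht
    obtain ⟨hd, hb⟩ := hc t ht
    obtain ⟨hb', hd'⟩ := LFGR.btw_trans (hbtw ⌊t⌋₊ (⌊t⌋₊ + 1) (Nat.le_succ _)) hb
    exact ⟨by rw [hd', h1, hd]; ring, hb'⟩
  have hcNat : ∀ m : ℕ, c (m : ℝ) = y m := by
    intro m
    have hd := (hc (m : ℝ) (Nat.cast_nonneg m)).1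
    rw [Nat.floor_natCast] at hd
    have : dist (y m) (c (m : ℝ)) = 0 := by rw [hd]; ring
    exact (dist_eq_zero.1 this).symm
  have hcM : ∀ t : ℝ, 0 ≤ t → ∀ M : ℕ, t ≤ M → MetricBtw θ (c t) (y M) := by
    intro t ht M htM
    rcases eq_or_lt_of_le htM with heq | hlt
    · rw [heq, hcNat M]
      unfold MetricBtw; simp
    · have hfl : ⌊t⌋₊ < M := (Nat.floor_lt ht).2 hlt
      exact LFGR.btw_trans2 (hcθ t ht).2 (hbtw (⌊t⌋₊ + 1) M hfl)
  refine ⟨c, ?_, ?_, hcNat⟩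
  · have key : ∀ s t : ℝ, 0 ≤ s → 0 ≤ t → s ≤ t → dist (c s) (c t) = |s - t| := by
      intro s t hs ht hst
      have htM : t ≤ (⌊t⌋₊ + 1 : ℕ) := by
        have := Nat.lt_floor_add_one t
        push_cast
        push_cast at this
        linarith
      have hbs := hcM s hs (⌊t⌋₊ + 1) (le_trans hst htM)
      have hbt := hcM t ht (⌊t⌋₊ + 1) htM
      rw [LFGR.seg_dist hcat hbs hbt, (hcθ s hs).1, (hcθ t ht).1]
    intro s t hs ht
    rcases le_total s t with h | h
    · exact key s t hs ht h
    · rw [dist_comm, abs_sub_comm]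
      exact key t s ht hs h
  · have := (hcθ 0 le_rfl).1
    rw [dist_comm] at this
    exact dist_eq_zero.1 this
end
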